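/- arXiv:1210.4197 — 9 statements merged into one kernel-verified Lean document; each statement's English description precedes it below -/
import Mathlib

section
/- Let R be a commutative ring, r a natural number, M an R-module with an ordered R-basis v of length 2r, and A an alternating 2r×2r matrix over R. Set σ := Σ_{i<j} A_{ij} · v_i ∧ v_j in ∧²M. Then the r-th wedge power satisfies σ^{∧r} = r!·Pf(A) · v_0 ∧ … ∧ v_{2r−1} in ∧^{2r}M. -/
open scoped Classical
open Matrix

/-- A permutation `π` of `Fin n` encodes a perfect matching (together with an ordering of the
pairs) when `π(2k) < π(2k+1)` for each pair and `π(0) < π(2) < … < π(n−2)`. -/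
def IsMatchingPerm {n : ℕ} (π : Equiv.Perm (Fin n)) : Prop :=
  (∀ k : ℕ, (h : 2 * k + 1 < n) → π ⟨2 * k, by omega⟩ < π ⟨2 * k + 1, h⟩) ∧
  (∀ k : ℕ, (h : 2 * k + 3 < n) → π ⟨2 * k, by omega⟩ < π ⟨2 * k + 2, by omega⟩)

/-- The Pfaffian of an `n × n` matrix over a commutative ring `R`. -/
noncomputable def Matrix.pfaffian {R : Type*} [CommRing R] {n : ℕ}
    (A : Matrix (Fin n) (Fin n) R) : R :=
  if hn : Even n then
    ∑ π ∈ Finset.univ.filter (fun π : Equiv.Perm (Fin n) => IsMatchingPerm π),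
      (Equiv.Perm.sign π : ℤ) •
        ∏ k ∈ (Finset.range (n / 2)).attach,
          A (π ⟨2 * k.1, by
                have hk := Finset.mem_range.mp k.2; rcases hn with ⟨m, hm⟩; omega⟩)
            (π ⟨2 * k.1 + 1, by
                have hk := Finset.mem_range.mp k.2; rcases hn with ⟨m, hm⟩; omega⟩)
  else 0

section Aux

variable {r : ℕ}

/-- The equivalence `Fin r × Fin 2 ≃ Fin (2*r)` sending `(k,b)` to `2*k+b`. -/
def eFin (r : ℕ) : Fin r × Fin 2 ≃ Fin (2 * r) :=
  finProdFinEquiv.trans (finCongr (mul_comm r 2))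

lemma eFin_val (k : Fin r) (b : Fin 2) : ((eFin r (k, b) : Fin (2 * r)) : ℕ) = 2 * k + b := by
  simp [eFin, finProdFinEquiv]; omega

/-- Block permutation of `Fin (2*r)` induced by a permutation of `Fin r`. -/
def bperm (r : ℕ) (ρ : Equiv.Perm (Fin r)) : Equiv.Perm (Fin (2 * r)) :=
  (eFin r).permCongr (Equiv.prodCongrLeft fun _ : Fin 2 => ρ)

lemma bperm_apply (ρ : Equiv.Perm (Fin r)) (k : Fin r) (b : Fin 2) :
    bperm r ρ (eFin r (k, b)) = eFin r (ρ k, b) := by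
  simp [bperm, Equiv.permCongr_apply, Equiv.prodCongrLeft]

lemma bperm_mul (ρ σ : Equiv.Perm (Fin r)) :
    bperm r (ρ * σ) = bperm r ρ * bperm r σ := by
  ext x
  obtain ⟨⟨k, b⟩, rfl⟩ := (eFin r).surjective x
  simp [bperm, Equiv.permCongr_apply, Equiv.prodCongrLeft]

lemma sign_bperm (ρ : Equiv.Perm (Fin r)) : Equiv.Perm.sign (bperm r ρ) = 1 := by
  rw [bperm, Equiv.Perm.sign_permCongr, Equiv.Perm.sign_prodCongrLeft]
  simp [Finset.prod_const, Int.units_sq]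

end Aux
section Itl

variable {α β : Type*} {r : ℕ}

/-- Interleaving of two `r`-tuples into a `2*r`-tuple. -/
def itl (F G : Fin r → α) : Fin (2 * r) → α := fun j =>
  if (j : ℕ) % 2 = 0 then F ⟨(j : ℕ) / 2, by have := j.2; omega⟩
  else G ⟨(j : ℕ) / 2, by have := j.2; omega⟩

lemma itl_comp (g : α → β) (F G : Fin r → α) : g ∘ itl F G = itl (g ∘ F) (g ∘ G) := by
  funext j
  simp only [Function.comp, itl]
  split <;> rfl

lemma itl_left (F G : Fin r → α) (k : Fin r) : itl F G (eFin r (k, 0)) = F k := by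
  have h : ((eFin r (k, 0) : Fin (2 * r)) : ℕ) = 2 * k := by rw [eFin_val]; rfl
  simp only [itl, h, Nat.mul_mod_right, if_pos]
  congr 1
  apply Fin.ext
  show 2 * (k : ℕ) / 2 = (k : ℕ)
  omega

lemma itl_right (F G : Fin r → α) (k : Fin r) : itl F G (eFin r (k, 1)) = G k := by
  have h : ((eFin r (k, 1) : Fin (2 * r)) : ℕ) = 2 * k + 1 := by rw [eFin_val]; rfl
  simp only [itl, h]
  rw [if_neg (by omega)]
  congr 1
  apply Fin.ext
  show (2 * (k : ℕ) + 1) / 2 = (k : ℕ)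
  omega

lemma prod_ofFn_itl {N : Type*} [Monoid N] : ∀ {r : ℕ} (F G : Fin r → N),
    (List.ofFn (itl F G)).prod = (List.ofFn fun k => F k * G k).prod := by
  intro r
  induction r with
  | zero => intro F G; rfl
  | succ n ih =>
    intro F G
    have htail : (fun i : Fin (2 * n) => itl F G i.succ.succ)
        = itl (F ∘ Fin.succ) (G ∘ Fin.succ) := by
      funext i
      simp only [itl, Fin.val_succ, Function.comp]
      have h2 : ((i : ℕ) + 1 + 1) % 2 = (i : ℕ) % 2 := by omega
      rw [h2]
      split
      · congr 1
        apply Fin.ext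
        show ((i : ℕ) + 1 + 1) / 2 = (i : ℕ) / 2 + 1
        omega
      · congr 1
        apply Fin.ext
        show ((i : ℕ) + 1 + 1) / 2 = (i : ℕ) / 2 + 1
        omega
    have h0 : itl F G 0 = F 0 := by
      simp only [itl]
      rw [if_pos (by rfl)]
      congr 1
      apply Fin.ext
      show ((0 : Fin (2 * (n+1))) : ℕ) / 2 = 0
      simp
    have h1 : itl F G 1 = G 0 := by
      simp only [itl]
      rw [if_neg (by norm_num)]
      congr 1
      apply Fin.ext
      show ((1 : Fin (2 * (n+1))) : ℕ) / 2 = 0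
      norm_num [Fin.val_one]
      exact Nat.mod_le _ _
    show (List.ofFn (fun j : Fin (2 * n + 1 + 1) => itl F G j)).prod = _
    rw [List.ofFn_succ, List.ofFn_succ]
    show (itl F G 0 :: itl F G 1 :: List.ofFn fun i : Fin (2 * n) => itl F G i.succ.succ).prod = _
    rw [htail, List.ofFn_succ (f := fun k : Fin (n + 1) => F k * G k)]
    rw [h0, h1, List.prod_cons, List.prod_cons, List.prod_cons, ih, mul_assoc]
    rfl

end Itl
section SumPow

lemma sum_pow_eq_sum_ofFn {S : Type*} [Semiring S] {ι : Type*} [Fintype ι] (x : ι → S) :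
    ∀ n : ℕ, (∑ i, x i) ^ n = ∑ f : Fin n → ι, (List.ofFn fun k => x (f k)).prod := by
  intro n
  induction n with
  | zero => simp
  | succ n ih =>
    rw [pow_succ', ih, Finset.mul_sum]
    rw [← (Fin.consEquiv (fun _ : Fin (n + 1) => ι)).sum_comp
      (fun f : Fin (n + 1) → ι => (List.ofFn fun k => x (f k)).prod)]
    rw [Fintype.sum_prod_type, Finset.sum_comm]
    apply Finset.sum_congr rfl
    intro g _
    rw [Finset.sum_mul]
    apply Finset.sum_congr rfl
    intro a _
    rw [List.ofFn_succ, List.prod_cons]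
    simp [Fin.consEquiv]

end SumPow
section SmulProd

lemma prod_ofFn_smul {R : Type*} [CommSemiring R] {S : Type*} [Semiring S] [Algebra R S] :
    ∀ {n : ℕ} (c : Fin n → R) (y : Fin n → S),
      (List.ofFn fun k => c k • y k).prod = (∏ k, c k) • (List.ofFn y).prod := by
  intro n
  induction n with
  | zero => intro c y; simp
  | succ n ih =>
    intro c y
    rw [List.ofFn_succ, List.ofFn_succ, List.prod_cons, List.prod_cons, ih,
      Fin.prod_univ_succ, smul_mul_smul]

end SmulProd
section StepF

variable {R : Type*} [CommRing R] {r : ℕ}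

lemma eFin_zero_eq (k : Fin r) (h : 2 * (k : ℕ) < 2 * r) :
    eFin r (k, 0) = ⟨2 * (k : ℕ), h⟩ := Fin.ext (by simp [eFin_val])

lemma eFin_one_eq (k : Fin r) (h : 2 * (k : ℕ) + 1 < 2 * r) :
    eFin r (k, 1) = ⟨2 * (k : ℕ) + 1, h⟩ := Fin.ext (by simp [eFin_val])

lemma bperm_one : bperm r (1 : Equiv.Perm (Fin r)) = 1 := by
  ext x
  obtain ⟨⟨k, b⟩, rfl⟩ := (eFin r).surjective x
  simp [bperm, Equiv.permCongr_apply, Equiv.prodCongrLeft]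

lemma pair_fst_injective (π : Equiv.Perm (Fin (2 * r))) :
    Function.Injective (fun k : Fin r => π (eFin r (k, 0))) := by
  intro a b h
  have h2 := (eFin r).injective (π.injective h)
  exact (Prod.ext_iff.mp h2).1

lemma matching_pairs_lt {τ : Equiv.Perm (Fin (2 * r))} (hτ : IsMatchingPerm τ) (k : Fin r) :
    τ (eFin r (k, 0)) < τ (eFin r (k, 1)) := by
  have h : 2 * (k : ℕ) + 1 < 2 * r := by have := k.2; omega
  have := hτ.1 k h
  rw [eFin_zero_eq k (by omega), eFin_one_eq k h]
  exact this

lemma matching_strictMono {τ : Equiv.Perm (Fin (2 * r))} (hτ : IsMatchingPerm τ) :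
    StrictMono fun k : Fin r => τ (eFin r (k, 0)) := by
  cases r with
  | zero => intro a; exact a.elim0
  | succ m =>
    apply Fin.strictMono_iff_lt_succ.mpr
    intro i
    have h : 2 * (i : ℕ) + 3 < 2 * (m + 1) := by have := i.2; omega
    have h2 := hτ.2 i h
    rw [eFin_zero_eq (Fin.castSucc i) (by simp only [Fin.coe_castSucc]; have := i.2; omega),
      eFin_zero_eq i.succ (by simp only [Fin.val_succ]; have := i.2; omega)]
    simp only [Fin.coe_castSucc, Fin.val_succ]
    have : (⟨2 * ((i : ℕ) + 1), by omega⟩ : Fin (2 * (m + 1))) = ⟨2 * (i : ℕ) + 2, by omega⟩ :=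
      Fin.mk_eq_mk.mpr (by omega)
    rw [this]
    exact h2

lemma stepF (A : Matrix (Fin (2 * r)) (Fin (2 * r)) R) :
    ∑ π ∈ Finset.univ.filter
        (fun π : Equiv.Perm (Fin (2 * r)) => ∀ k : Fin r, π (eFin r (k, 0)) < π (eFin r (k, 1))),
      ((Equiv.Perm.sign π : ℤ) • ∏ k : Fin r, A (π (eFin r (k, 0))) (π (eFin r (k, 1))))
    = (r.factorial : R) * A.pfaffian := by
  classical
  rw [Matrix.pfaffian, dif_pos (even_two_mul r)]
  -- rewrite the pfaffian summands
  have hR : ∀ τ : Equiv.Perm (Fin (2 * r)),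
      ((Equiv.Perm.sign τ : ℤ) •
        ∏ k ∈ (Finset.range (2 * r / 2)).attach,
          A (τ ⟨2 * k.1, by have hk := Finset.mem_range.mp k.2
                            rcases even_two_mul r with ⟨m, hm⟩; omega⟩)
            (τ ⟨2 * k.1 + 1, by have hk := Finset.mem_range.mp k.2
                                rcases even_two_mul r with ⟨m, hm⟩; omega⟩))
      = ((Equiv.Perm.sign τ : ℤ) •
          ∏ k : Fin r, A (τ (eFin r (k, 0))) (τ (eFin r (k, 1)))) := by
    intro τ
    congr 1
    refine Finset.prod_bij'
      (fun k _ => (⟨k.1, by have := Finset.mem_range.mp k.2; omega⟩ : Fin r))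
      (fun m _ => ⟨m.1, Finset.mem_range.mpr (by have := m.2; omega)⟩)
      (fun a _ => Finset.mem_univ _) (fun a _ => Finset.mem_attach _ _)
      (fun a _ => Subtype.ext rfl) (fun a _ => Fin.ext rfl) ?_
    intro a _
    congr 1
    · congr 1
      exact (eFin_zero_eq ⟨a.1, by have := Finset.mem_range.mp a.2; omega⟩
        (by have := Finset.mem_range.mp a.2; omega)).symm
    · congr 1
      exact (eFin_one_eq ⟨a.1, by have := Finset.mem_range.mp a.2; omega⟩
        (by have := Finset.mem_range.mp a.2; omega)).symm
  rw [Finset.sum_congr rfl fun τ _ => hR τ]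
  have hsum2 : ∑ p ∈ (Finset.univ.filter fun τ : Equiv.Perm (Fin (2 * r)) => IsMatchingPerm τ)
        ×ˢ (Finset.univ : Finset (Equiv.Perm (Fin r))),
      ((Equiv.Perm.sign p.1 : ℤ) • ∏ k : Fin r, A (p.1 (eFin r (k, 0))) (p.1 (eFin r (k, 1))))
      = (r.factorial : R) * ∑ τ ∈ Finset.univ.filter
            (fun τ : Equiv.Perm (Fin (2 * r)) => IsMatchingPerm τ),
          ((Equiv.Perm.sign τ : ℤ) • ∏ k : Fin r, A (τ (eFin r (k, 0))) (τ (eFin r (k, 1)))) := by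
    rw [Finset.sum_product, Finset.mul_sum]
    apply Finset.sum_congr rfl
    intro τ _
    dsimp only
    rw [Finset.sum_const, Finset.card_univ, Fintype.card_perm, Fintype.card_fin, nsmul_eq_mul]
  rw [← hsum2]
  refine Finset.sum_bij'
    (fun π _ => (π * bperm r (Tuple.sort fun k => π (eFin r (k, 0))),
      (Tuple.sort fun k => π (eFin r (k, 0)))⁻¹))
    (fun p _ => p.1 * bperm r p.2) ?_ ?_ ?_ ?_ ?_
  · -- hi : lands in matching × univ
    intro π hπ
    have hQ := (Finset.mem_filter.mp hπ).2
    have hmono := Tuple.monotone_sort (fun k => π (eFin r (k, 0)))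
    have hsm : StrictMono ((fun k => π (eFin r (k, 0))) ∘ (Tuple.sort fun k => π (eFin r (k, 0)))) :=
      hmono.strictMono_of_injective ((pair_fst_injective π).comp (Equiv.injective _))
    refine Finset.mem_product.mpr ⟨Finset.mem_filter.mpr ⟨Finset.mem_univ _, ?_, ?_⟩,
      Finset.mem_univ _⟩
    · intro k h
      have hkr : k < r := by omega
      have g0 : (⟨2 * k, by omega⟩ : Fin (2 * r)) = eFin r (⟨k, hkr⟩, 0) :=
        (eFin_zero_eq ⟨k, hkr⟩ (by omega)).symm
      have g1 : (⟨2 * k + 1, h⟩ : Fin (2 * r)) = eFin r (⟨k, hkr⟩, 1) :=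
        (eFin_one_eq ⟨k, hkr⟩ h).symm
      rw [g0, g1]
      show π (bperm r _ (eFin r (⟨k, hkr⟩, 0))) < π (bperm r _ (eFin r (⟨k, hkr⟩, 1)))
      rw [bperm_apply, bperm_apply]
      exact hQ _
    · intro k h
      have hkr : k < r := by omega
      have hkr1 : k + 1 < r := by omega
      have g0 : (⟨2 * k, by omega⟩ : Fin (2 * r)) = eFin r (⟨k, hkr⟩, 0) :=
        (eFin_zero_eq ⟨k, hkr⟩ (by omega)).symm
      have g1 : (⟨2 * k + 2, by omega⟩ : Fin (2 * r)) = eFin r (⟨k + 1, hkr1⟩, 0) :=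
        (eFin_zero_eq ⟨k + 1, hkr1⟩ (by omega)).symm
      rw [g0, g1]
      show π (bperm r _ (eFin r (⟨k, hkr⟩, 0))) < π (bperm r _ (eFin r (⟨k + 1, hkr1⟩, 0)))
      rw [bperm_apply, bperm_apply]
      exact hsm (by exact Fin.mk_lt_mk.mpr (by omega))
  · -- hj : lands in Q
    intro p hp
    have hτ := (Finset.mem_filter.mp (Finset.mem_product.mp hp).1).2
    refine Finset.mem_filter.mpr ⟨Finset.mem_univ _, ?_⟩
    intro k
    show p.1 (bperm r p.2 (eFin r (k, 0))) < p.1 (bperm r p.2 (eFin r (k, 1)))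
    rw [bperm_apply, bperm_apply]
    exact matching_pairs_lt hτ _
  · -- left inverse
    intro π hπ
    show π * bperm r (Tuple.sort fun k => π (eFin r (k, 0)))
        * bperm r (Tuple.sort fun k => π (eFin r (k, 0)))⁻¹ = π
    rw [mul_assoc, ← bperm_mul, mul_inv_cancel, bperm_one, mul_one]
  · -- right inverse
    intro p hp
    obtain ⟨τ, ρ⟩ := p
    dsimp only
    have hτ := (Finset.mem_filter.mp (Finset.mem_product.mp hp).1).2
    have hf : (fun k : Fin r => (τ * bperm r ρ) (eFin r (k, 0)))
        = fun k => τ (eFin r (ρ k, 0)) := by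
      funext k
      show τ (bperm r ρ (eFin r (k, 0))) = _
      rw [bperm_apply]
    have hfinj : Function.Injective fun k : Fin r => (τ * bperm r ρ) (eFin r (k, 0)) := by
      rw [hf]
      exact fun a b hab => ρ.injective (pair_fst_injective τ hab)
    have hsort : (Tuple.sort fun k : Fin r => (τ * bperm r ρ) (eFin r (k, 0))) = ρ⁻¹ := by
      refine (Tuple.eq_sort_iff.mpr ⟨?_, ?_⟩).symm
      · have : (fun k : Fin r => (τ * bperm r ρ) (eFin r (k, 0))) ∘ ⇑ρ⁻¹
            = fun k => τ (eFin r (k, 0)) := by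
          funext k
          show (τ * bperm r ρ) ((eFin r) (ρ⁻¹ k, 0)) = _
          show τ (bperm r ρ ((eFin r) (ρ⁻¹ k, 0))) = _
          rw [bperm_apply, ← Equiv.Perm.mul_apply, mul_inv_cancel, Equiv.Perm.one_apply]
        rw [this]
        exact (matching_strictMono hτ).monotone
      · intro i j hij heq
        exact absurd (ρ⁻¹.injective (hfinj heq)) hij.ne
    simp only [hsort]
    refine Prod.ext ?_ ?_
    · show τ * bperm r ρ * bperm r ρ⁻¹ = τ
      rw [mul_assoc, ← bperm_mul, mul_inv_cancel, bperm_one, mul_one]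
    · exact inv_inv ρ
  · -- summands agree
    intro π hπ
    dsimp only
    have hb : ∀ (k : Fin r) (b : Fin 2),
        (π * bperm r (Tuple.sort fun k => π (eFin r (k, 0)))) (eFin r (k, b))
        = π (eFin r ((Tuple.sort fun k => π (eFin r (k, 0))) k, b)) := by
      intro k b
      show π (bperm r _ (eFin r (k, b))) = _
      rw [bperm_apply]
    congr 1
    · push_cast
      congr 1
      rw [Equiv.Perm.sign_mul, sign_bperm, mul_one]
    · simp only [hb]
      exact (Equiv.prod_comp (Tuple.sort fun k => π (eFin r (k, 0)))
        (fun k => A (π (eFin r (k, 0))) (π (eFin r (k, 1))))).symm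

end StepF
section Main

variable {r : ℕ}

lemma mu_pair (π : Equiv.Perm (Fin (2 * r))) :
    itl (fun k : Fin r => π (eFin r (k, 0))) (fun k => π (eFin r (k, 1))) = ⇑π := by
  funext x
  obtain ⟨⟨k, b⟩, rfl⟩ := (eFin r).surjective x
  fin_cases b
  · exact itl_left _ _ k
  · exact itl_right _ _ k

/-- Let `R` be a commutative ring, `r` a natural number, `M` an `R`-module
with an ordered `R`-basis `v` of length `2r`, and `A` an alternating `2r × 2r` matrix over
`R`.  Set `σ := Σ_{i<j} A_{ij} · v_i ∧ v_j` (in the exterior algebra of `M`).  Then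
`σ^r = r! · Pf(A) · v_0 ∧ … ∧ v_{2r−1}`. -/
theorem wedge_pow_eq_pfaffian {R : Type*} [CommRing R] (r : ℕ)
    (M : Type*) [AddCommGroup M] [Module R M] (v : Module.Basis (Fin (2 * r)) R M)
    (A : Matrix (Fin (2 * r)) (Fin (2 * r)) R) (hAt : Aᵀ = -A) (hAd : ∀ i, A i i = 0) :
    (∑ p ∈ Finset.univ.filter (fun p : Fin (2 * r) × Fin (2 * r) => p.1 < p.2),
        A p.1 p.2 • (ExteriorAlgebra.ι R (v p.1) * ExteriorAlgebra.ι R (v p.2))) ^ r =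
      ((r.factorial : R) * A.pfaffian) •
        ((List.finRange (2 * r)).map fun i => ExteriorAlgebra.ι R (v i)).prod := by
  classical
  have hσ : (∑ p ∈ Finset.univ.filter (fun p : Fin (2 * r) × Fin (2 * r) => p.1 < p.2),
        A p.1 p.2 • (ExteriorAlgebra.ι R (v p.1) * ExteriorAlgebra.ι R (v p.2)))
      = ∑ p : Fin (2 * r) × Fin (2 * r),
          (if p.1 < p.2 then A p.1 p.2 else 0) •
            (ExteriorAlgebra.ι R (v p.1) * ExteriorAlgebra.ι R (v p.2)) := by
    rw [Finset.sum_filter]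
    apply Finset.sum_congr rfl
    intro p _
    split <;> simp
  rw [hσ, sum_pow_eq_sum_ofFn]
  have hterm : ∀ f : Fin r → Fin (2 * r) × Fin (2 * r),
      (List.ofFn fun k => (if (f k).1 < (f k).2 then A (f k).1 (f k).2 else 0) •
          (ExteriorAlgebra.ι R (v (f k).1) * ExteriorAlgebra.ι R (v (f k).2))).prod
      = (∏ k, if (f k).1 < (f k).2 then A (f k).1 (f k).2 else 0) •
          ExteriorAlgebra.ιMulti R (2 * r)
            (v ∘ itl (fun k => (f k).1) (fun k => (f k).2)) := by
    intro f
    rw [prod_ofFn_smul]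
    congr 1
    rw [ExteriorAlgebra.ιMulti_apply,
      ← prod_ofFn_itl (F := fun k => ExteriorAlgebra.ι R (v (f k).1))
        (G := fun k => ExteriorAlgebra.ι R (v (f k).2))]
    show _ = (List.ofFn ((fun i : Fin (2 * r) => ExteriorAlgebra.ι R (v i))
      ∘ itl (fun k => (f k).1) (fun k => (f k).2))).prod
    rw [itl_comp]
    rfl
  rw [Finset.sum_congr rfl fun f _ => hterm f]
  rw [← Finset.sum_subset (Finset.subset_univ
    ((Finset.univ : Finset (Fin r → Fin (2 * r) × Fin (2 * r))).filter
      (fun f => Function.Injective (itl (fun k => (f k).1) (fun k => (f k).2))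
        ∧ ∀ k, (f k).1 < (f k).2)))
    ?_]
  swap
  · intro f _ hf
    rw [Finset.mem_filter] at hf
    push_neg at hf
    by_cases hinc : ∀ k, (f k).1 < (f k).2
    · have hninj : ¬ Function.Injective (itl (fun k => (f k).1) (fun k => (f k).2)) := by
        intro hI
        obtain ⟨k, hk⟩ := hf (Finset.mem_univ f) hI
        exact absurd (hinc k) (not_lt.mpr hk)
      obtain ⟨i, j, hab, hne⟩ := Function.not_injective_iff.mp hninj
      have h0 : ExteriorAlgebra.ιMulti R (2 * r)
          (v ∘ itl (fun k => (f k).1) (fun k => (f k).2)) = 0 :=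
        AlternatingMap.map_eq_zero_of_eq _ _ (by simp [Function.comp, hab]) hne
      rw [h0, smul_zero]
    · push_neg at hinc
      obtain ⟨k, hk⟩ := hinc
      have hc0 : (if (f k).1 < (f k).2 then A (f k).1 (f k).2 else 0) = 0 :=
        if_neg (not_lt.mpr hk)
      rw [Finset.prod_eq_zero (Finset.mem_univ k) hc0, zero_smul]
  · -- now reindex the good sum to permutations
    rw [← List.ofFn_eq_map (f := fun i => ExteriorAlgebra.ι R (v i)),
      ← ExteriorAlgebra.ιMulti_apply]
    refine Eq.trans (Finset.sum_bij'
      (fun f hf => Equiv.ofBijective (itl (fun k => (f k).1) (fun k => (f k).2))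
        (Finite.injective_iff_bijective.mp (Finset.mem_filter.mp hf).2.1))
      (fun π _ => fun k => (π (eFin r (k, 0)), π (eFin r (k, 1))))
      ?_ ?_ ?_ ?_ ?_
      (g := fun π : Equiv.Perm (Fin (2 * r)) =>
        ((Equiv.Perm.sign π : ℤ) • ∏ k : Fin r, A (π (eFin r (k, 0))) (π (eFin r (k, 1)))) •
          ExteriorAlgebra.ιMulti R (2 * r) ⇑v)
      (t := Finset.univ.filter
        (fun π : Equiv.Perm (Fin (2 * r)) =>
          ∀ k : Fin r, π (eFin r (k, 0)) < π (eFin r (k, 1))))) ?_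
    · -- hi
      intro f hf
      obtain ⟨-, hinj, hinc⟩ := Finset.mem_filter.mp hf
      refine Finset.mem_filter.mpr ⟨Finset.mem_univ _, ?_⟩
      intro k
      show itl (fun k => (f k).1) (fun k => (f k).2) (eFin r (k, 0))
          < itl (fun k => (f k).1) (fun k => (f k).2) (eFin r (k, 1))
      rw [itl_left, itl_right]
      exact hinc k
    · -- hj
      intro π hπ
      have hπ' := (Finset.mem_filter.mp hπ).2
      refine Finset.mem_filter.mpr ⟨Finset.mem_univ _, ?_, fun k => hπ' k⟩
      show Function.Injective (itl (fun k : Fin r => π (eFin r (k, 0)))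
        (fun k => π (eFin r (k, 1))))
      rw [mu_pair]
      exact π.injective
    · -- left inv
      intro f hf
      funext k
      refine Prod.ext ?_ ?_
      · show itl (fun k => (f k).1) (fun k => (f k).2) (eFin r (k, 0)) = (f k).1
        rw [itl_left]
      · show itl (fun k => (f k).1) (fun k => (f k).2) (eFin r (k, 1)) = (f k).2
        rw [itl_right]
    · -- right inv
      intro π hπ
      apply Equiv.ext
      intro x
      show itl (fun k : Fin r => π (eFin r (k, 0))) (fun k => π (eFin r (k, 1))) x = π x
      rw [mu_pair]
    · -- summands
      intro f hf
      obtain ⟨-, hinj, hinc⟩ := Finset.mem_filter.mp hf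
      have hco : ∀ k : Fin r,
          (if (f k).1 < (f k).2 then A (f k).1 (f k).2 else 0)
          = A ((Equiv.ofBijective _ (Finite.injective_iff_bijective.mp hinj)) (eFin r (k, 0)))
              ((Equiv.ofBijective _ (Finite.injective_iff_bijective.mp hinj)) (eFin r (k, 1))) := by
        intro k
        rw [if_pos (hinc k)]
        congr 1
        · show _ = itl (fun k => (f k).1) (fun k => (f k).2) (eFin r (k, 0))
          rw [itl_left]
        · show _ = itl (fun k => (f k).1) (fun k => (f k).2) (eFin r (k, 1))
          rw [itl_right]
      rw [Finset.prod_congr rfl fun k _ => hco k]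
      have hvmu : v ∘ itl (fun k => (f k).1) (fun k => (f k).2)
          = ⇑v ∘ ⇑(Equiv.ofBijective _ (Finite.injective_iff_bijective.mp hinj)) := rfl
      rw [hvmu, AlternatingMap.map_perm, Units.smul_def, smul_comm]
      rw [smul_assoc]
    · -- final scalar sum
      rw [← Finset.sum_smul, stepF]

end Main
end

section
/- Let K be a field of characteristic zero, r a natural number, M a K-vector space with an ordered basis v of length 2r, and A an alternating 2r×2r matrix over K. Set σ := Σ_{i<j} A_{ij} · v_i ∧ v_j. Then A is invertible if and only if σ^{∧r} ≠ 0 in ∧^{2r}M. -/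
open scoped Classical
open Matrix

namespace WedgeAux

variable {K : Type*} [Field K] {M : Type*} [AddCommGroup M] [Module K M]

local notation "Λ" => ExteriorAlgebra K M
local notation "ιK" => ExteriorAlgebra.ι K (M := M)
local notation "cL" => CliffordAlgebra.contractLeft (Q := (0 : QuadraticForm K M))

lemma ι_anticomm (a b : M) : ιK a * ιK b = - (ιK b * ιK a) := by
  have := ExteriorAlgebra.ι_add_mul_swap (R := K) a b
  linear_combination (norm := noncomm_ring) this

lemma ι_mem_mul_prod (m : M) : ∀ (L : List M), m ∈ L → ιK m * (L.map ιK).prod = 0 := by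
  intro L
  induction L with
  | nil => intro h; exact absurd h List.not_mem_nil
  | cons a t ih =>
    intro hm
    rcases List.mem_cons.mp hm with h | h
    · subst h
      simp only [List.map_cons, List.prod_cons, ← mul_assoc, ExteriorAlgebra.ι_sq_zero, zero_mul]
    · rw [List.map_cons, List.prod_cons, ← mul_assoc, ι_anticomm m a, neg_mul,
        mul_assoc, ih h, mul_zero, neg_zero]

lemma prod_mul_ι (m : M) : ∀ (L : List M),
    (L.map ιK).prod * ιK m = ((-1 : K) ^ L.length) • (ιK m * (L.map ιK).prod) := by
  intro L
  induction L with
  | nil => simp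
  | cons a t ih =>
    rw [List.map_cons, List.prod_cons, List.length_cons, mul_assoc, ih, pow_succ,
      mul_smul_comm, ← mul_assoc, ι_anticomm a m]
    simp [smul_smul, mul_assoc]

-- contraction of `ι a * ι b`
lemma contract_pair (f : Module.Dual K M) (a b : M) :
    cL f (ιK a * ιK b) = f a • ιK b - f b • ιK a := by
  rw [CliffordAlgebra.contractLeft_ι_mul, CliffordAlgebra.contractLeft_ι,
    ← Algebra.commutes, ← Algebra.smul_def]

lemma contract_pair_mul (f : Module.Dual K M) (a b : M) (y : Λ) :
    cL f (ιK a * ιK b * y) = (cL f (ιK a * ιK b)) * y + (ιK a * ιK b) * (cL f y) := by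
  rw [mul_assoc, CliffordAlgebra.contractLeft_ι_mul, CliffordAlgebra.contractLeft_ι_mul,
    contract_pair]
  show _ = _
  simp only [sub_mul, add_mul, smul_mul_assoc, mul_smul_comm, mul_sub, mul_assoc]
  abel

section WithBasis

variable {N : ℕ} (v : Module.Basis (Fin N) K M)

/-- The product `e_k e_{k+1} ⋯ e_{N-1}`. -/
noncomputable def partialTop (k : ℕ) : ExteriorAlgebra K M :=
  (((List.ofFn v).drop k).map ιK).prod

lemma partialTop_length_le {k : ℕ} (h : N ≤ k) : partialTop v k = 1 := by
  unfold partialTop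
  rw [List.drop_eq_nil_of_le (by simpa using h)]
  simp

lemma partialTop_succ {k : ℕ} (h : k < N) :
    partialTop v k = ιK (v ⟨k, h⟩) * partialTop v (k + 1) := by
  unfold partialTop
  rw [List.drop_eq_getElem_cons (by simpa using h), List.map_cons, List.prod_cons]
  congr
  simp

lemma coord_basis (k j : Fin N) : (v.coord k) (v j) = if k = j then 1 else 0 := by
  rw [Module.Basis.coord_apply, Module.Basis.repr_self, Finsupp.single_apply]
  simp [eq_comm]

lemma exists_eq_partialTop_mul (d : ℕ) : ∀ τ : ExteriorAlgebra K M,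
    (∀ j : Fin N, N - d ≤ j.val → ιK (v j) * τ = 0) →
    ∃ ρ, τ = partialTop v (N - d) * ρ := by
  induction d with
  | zero =>
    intro τ _
    exact ⟨τ, by rw [Nat.sub_zero, partialTop_length_le v le_rfl, one_mul]⟩
  | succ d ih =>
    intro τ hτ
    by_cases h : N ≤ d
    · have hEq : N - (d + 1) = N - d := by omega
      rw [hEq]
      exact ih τ (fun j hj => hτ j (by omega))
    · push_neg at h
      set k : ℕ := N - (d + 1) with hk
      have hkN : k < N := by omega
      set g := v.coord ⟨k, hkN⟩ with hg
      set τ' := cL g τ with hτ'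
      have h0 : cL g (ιK (v ⟨k, hkN⟩) * τ) = 0 := by
        rw [hτ ⟨k, hkN⟩ (by simp), map_zero]
      rw [CliffordAlgebra.contractLeft_ι_mul, coord_basis, if_pos rfl, one_smul,
        sub_eq_zero] at h0
      have hkill : ∀ j : Fin N, N - d ≤ j.val → ιK (v j) * τ' = 0 := by
        intro j hj
        have h1 : cL g (ιK (v j) * τ) = 0 := by
          rw [hτ j (by omega), map_zero]
        rw [CliffordAlgebra.contractLeft_ι_mul, coord_basis] at h1
        have hne : (⟨k, hkN⟩ : Fin N) ≠ j := by
          intro hEq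
          have := congrArg Fin.val hEq
          simp at this
          omega
        rw [if_neg hne, zero_smul, zero_sub, neg_eq_zero] at h1
        exact h1
      obtain ⟨ρ, hρ⟩ := ih τ' hkill
      refine ⟨ρ, ?_⟩
      have hsucc : N - d = k + 1 := by omega
      rw [hsucc] at hρ
      rw [h0, ← hτ', hρ, ← mul_assoc, ← partialTop_succ v hkN]

lemma exists_eq_top_mul (τ : ExteriorAlgebra K M)
    (hτ : ∀ j : Fin N, ιK (v j) * τ = 0) :
    ∃ ρ, τ = partialTop v 0 * ρ := by
  have := exists_eq_partialTop_mul v N τ (fun j _ => hτ j)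
  rwa [Nat.sub_self] at this

lemma top_mul_ι (m : M) : partialTop v 0 * ιK m = 0 := by
  have hm : m = ∑ i, v.repr m i • v i := (Module.Basis.sum_repr v m).symm
  rw [hm, map_sum, Finset.mul_sum]
  refine Finset.sum_eq_zero fun i _ => ?_
  rw [_root_.map_smul, mul_smul_comm]
  unfold partialTop
  rw [List.drop_zero, prod_mul_ι, ι_mem_mul_prod (v i) _ (by simp [List.mem_ofFn]),
    smul_zero, smul_zero]

lemma top_mul (x : ExteriorAlgebra K M) :
    partialTop v 0 * x = (ExteriorAlgebra.algebraMapInv (M := M) x) • partialTop v 0 := by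
  induction x using ExteriorAlgebra.induction with
  | algebraMap r =>
    rw [show (ExteriorAlgebra.algebraMapInv (algebraMap K (ExteriorAlgebra K M) r) : K) = r
        from ExteriorAlgebra.algebraMap_leftInverse M r,
      ← Algebra.commutes, ← Algebra.smul_def]
  | ι m =>
    rw [top_mul_ι]
    simp [ExteriorAlgebra.algebraMapInv, ExteriorAlgebra.lift_ι_apply]
  | mul a b ha hb =>
    rw [← mul_assoc, ha, smul_mul_assoc, hb, smul_smul, _root_.map_mul]
  | add a b ha hb =>
    rw [mul_add, ha, hb, map_add, add_smul]

lemma ιMulti_succ_eq_zero (v : Module.Basis (Fin N) K M) (f : Fin (N + 1) → M) :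
    ExteriorAlgebra.ιMulti K (N + 1) f = 0 := by
  have hf : f = fun i => ∑ j, v.repr (f i) j • v j := by
    funext i; exact (Module.Basis.sum_repr v (f i)).symm
  rw [hf]
  have : ExteriorAlgebra.ιMulti K (N + 1) (M := M) (fun i => ∑ j, v.repr (f i) j • v j)
      = (ExteriorAlgebra.ιMulti K (N + 1) (M := M)).toMultilinearMap
        (fun i => ∑ j, v.repr (f i) j • v j) := rfl
  rw [this, MultilinearMap.map_sum]
  refine Finset.sum_eq_zero fun r _ => ?_
  rw [MultilinearMap.map_smul_univ]
  obtain ⟨i, j, hij, hr⟩ := Fintype.exists_ne_map_eq_of_card_lt r (by simp)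
  have : (ExteriorAlgebra.ιMulti K (N + 1) (M := M)).toMultilinearMap (fun i => v (r i))
      = ExteriorAlgebra.ιMulti K (N + 1) (M := M) (fun i => v (r i)) := rfl
  rw [this, AlternatingMap.map_eq_zero_of_eq _ _ (by rw [hr]) hij, smul_zero]

lemma exteriorPower_succ_eq_bot (v : Module.Basis (Fin N) K M) : ⋀[K]^(N + 1) M = ⊥ := by
  rw [← ExteriorAlgebra.ιMulti_span_fixedDegree K (N + 1) (M := M)]
  refine le_antisymm ?_ bot_le
  rw [Submodule.span_le]
  rintro _ ⟨f, rfl⟩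
  rw [SetLike.mem_coe, Submodule.mem_bot]
  exact ιMulti_succ_eq_zero v f

lemma partialTop_mem : partialTop v 0 ∈ ⋀[K]^N M := by
  have : partialTop v 0 = ExteriorAlgebra.ιMulti K N v := by
    rw [ExteriorAlgebra.ιMulti_apply]
    unfold partialTop
    rw [List.drop_zero, List.map_ofFn]
    rfl
  rw [this]
  exact ExteriorAlgebra.ιMulti_range K N ⟨⇑v, rfl⟩

end WithBasis

section Sigma

variable {n : ℕ} (v : Module.Basis (Fin n) K M) (A : Matrix (Fin n) (Fin n) K)

/-- The 2-vector associated to `A` and `v`. -/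
noncomputable def sigma : ExteriorAlgebra K M :=
  ∑ p ∈ Finset.univ.filter (fun p : Fin n × Fin n => p.1 < p.2),
    A p.1 p.2 • (ιK (v p.1) * ιK (v p.2))

lemma sigma_mem : sigma v A ∈ ⋀[K]^2 M := by
  refine Submodule.sum_mem _ fun p _ => Submodule.smul_mem _ _ ?_
  have h2 : (⋀[K]^2 M) = LinearMap.range (ExteriorAlgebra.ι K : M →ₗ[K] ExteriorAlgebra K M) *
      LinearMap.range (ExteriorAlgebra.ι K : M →ₗ[K] ExteriorAlgebra K M) := sq _
  rw [h2]
  exact Submodule.mul_mem_mul (LinearMap.mem_range_self _ _) (LinearMap.mem_range_self _ _)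

lemma sigma_pow_mem (m : ℕ) : (sigma v A) ^ m ∈ ⋀[K]^(2 * m) M := by
  have h : (⋀[K]^(2 * m) M) = (⋀[K]^2 M) ^ m := pow_mul _ 2 m
  rw [h]
  exact Submodule.pow_mem_pow _ (sigma_mem v A) m

lemma pair_comm_ι (a b x : M) : (ιK a * ιK b) * ιK x = ιK x * (ιK a * ιK b) := by
  rw [mul_assoc, ι_anticomm b x, mul_neg, ← mul_assoc, ι_anticomm a x, neg_mul, neg_neg,
    mul_assoc]

lemma sigma_comm_ι (x : M) : sigma v A * ιK x = ιK x * sigma v A := by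
  unfold sigma
  rw [Finset.sum_mul, Finset.mul_sum]
  refine Finset.sum_congr rfl fun p _ => ?_
  rw [smul_mul_assoc, mul_smul_comm, pair_comm_ι]

lemma sigma_leibniz (f : Module.Dual K M) (y : ExteriorAlgebra K M) :
    cL f (sigma v A * y) = (cL f (sigma v A)) * y + sigma v A * (cL f y) := by
  unfold sigma
  rw [Finset.sum_mul, map_sum, map_sum, Finset.sum_mul, Finset.sum_mul, ← Finset.sum_add_distrib]
  refine Finset.sum_congr rfl fun p _ => ?_
  rw [smul_mul_assoc, _root_.map_smul, _root_.map_smul, contract_pair_mul, smul_add,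
    smul_mul_assoc, smul_mul_assoc]

lemma sigma_contract_pow (f : Module.Dual K M) (w : M)
    (hw : cL f (sigma v A) = ιK w) (m : ℕ) :
    cL f (sigma v A ^ (m + 1)) = ((m + 1 : ℕ) : K) • (ιK w * sigma v A ^ m) := by
  induction m with
  | zero => simp [hw]
  | succ m ih =>
    rw [pow_succ', sigma_leibniz, ih, hw, mul_smul_comm, ← mul_assoc, sigma_comm_ι,
      mul_assoc, ← pow_succ']
    push_cast
    module

/-- The linear functional with coordinates `c` in the dual basis. -/
noncomputable def fc (c : Fin n → K) : Module.Dual K M := ∑ k, c k • v.coord k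

lemma fc_apply (c : Fin n → K) (i : Fin n) : fc v c (v i) = c i := by
  unfold fc
  simp only [LinearMap.sum_apply, LinearMap.smul_apply, coord_basis, smul_eq_mul, mul_ite,
    mul_one, mul_zero, Finset.sum_ite_eq', Finset.mem_univ, if_true]

lemma sigma_contract (hAt : Aᵀ = -A) (hAd : ∀ i, A i i = 0) (c : Fin n → K) :
    cL (fc v c) (sigma v A) = ιK (∑ j, (c ᵥ* A) j • v j) := by
  classical
  have hA' : ∀ i j : Fin n, A j i = - A i j := by
    intro i j
    have := congrFun (congrFun hAt i) j
    simpa [Matrix.transpose_apply] using this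
  set S := (Finset.univ : Finset (Fin n × Fin n)).filter (fun p => p.1 < p.2) with hS
  set G := (Finset.univ : Finset (Fin n × Fin n)).filter (fun p => p.2 < p.1) with hG
  set ND := (Finset.univ : Finset (Fin n × Fin n)).filter (fun p => ¬ p.1 < p.2) with hND
  have hLHS : cL (fc v c) (sigma v A) =
      (∑ p ∈ S, (c p.1 * A p.1 p.2) • ιK (v p.2)) -
      (∑ p ∈ S, (c p.2 * A p.1 p.2) • ιK (v p.1)) := by
    unfold sigma
    rw [map_sum, ← Finset.sum_sub_distrib]
    refine Finset.sum_congr rfl fun p _ => ?_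
    rw [_root_.map_smul, contract_pair, fc_apply, fc_apply, smul_sub, smul_smul, smul_smul,
      mul_comm (A p.1 p.2) (c p.1), mul_comm (A p.1 p.2) (c p.2)]
  have hRHS1 : ιK (∑ j, (c ᵥ* A) j • v j) =
      ∑ p ∈ (Finset.univ : Finset (Fin n × Fin n)), (c p.1 * A p.1 p.2) • ιK (v p.2) := by
    rw [map_sum, ← Finset.univ_product_univ, Finset.sum_product, Finset.sum_comm]
    refine Finset.sum_congr rfl fun j _ => ?_
    rw [_root_.map_smul, Matrix.vecMul, dotProduct, Finset.sum_smul]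
  have hsplit : ∑ p ∈ (Finset.univ : Finset (Fin n × Fin n)), (c p.1 * A p.1 p.2) • ιK (v p.2)
      = (∑ p ∈ S, (c p.1 * A p.1 p.2) • ιK (v p.2))
        + ∑ p ∈ ND, (c p.1 * A p.1 p.2) • ιK (v p.2) :=
    (Finset.sum_filter_add_sum_filter_not _ _ _).symm
  have hND_G : ∑ p ∈ ND, (c p.1 * A p.1 p.2) • ιK (v p.2)
      = ∑ p ∈ G, (c p.1 * A p.1 p.2) • ιK (v p.2) := by
    refine (Finset.sum_subset ?_ ?_).symm
    · exact Finset.monotone_filter_right _ (fun p _ hp => lt_asymm hp)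
    · intro p hp hpG
      simp only [hND, hG, Finset.mem_filter, Finset.mem_univ, true_and] at hp hpG
      have : p.1 = p.2 := le_antisymm (le_of_not_gt hpG) (le_of_not_gt hp)
      rw [← this, hAd, mul_zero, zero_smul]
  have hG_S : ∑ p ∈ G, (c p.1 * A p.1 p.2) • ιK (v p.2)
      = - ∑ p ∈ S, (c p.2 * A p.1 p.2) • ιK (v p.1) := by
    rw [← Finset.sum_neg_distrib]
    refine Finset.sum_bij' (fun p _ => (p.2, p.1)) (fun p _ => (p.2, p.1)) ?_ ?_ ?_ ?_ ?_
    · intro p hp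
      simp only [hG, hS, Finset.mem_filter, Finset.mem_univ, true_and] at hp ⊢
      exact hp
    · intro p hp
      simp only [hG, hS, Finset.mem_filter, Finset.mem_univ, true_and] at hp ⊢
      exact hp
    · intro p _; rfl
    · intro p _; rfl
    · intro p hp
      rw [hA' p.1 p.2]
      simp only [mul_neg, neg_smul, neg_neg]
  rw [hLHS, hRHS1, hsplit, hND_G, hG_S, sub_eq_add_neg]

end Sigma

lemma eq_zero_of_mem_ne {i j : ℕ} (hij : i ≠ j) {x : ExteriorAlgebra K M}
    (hi : x ∈ ⋀[K]^i M) (hj : x ∈ ⋀[K]^j M) : x = 0 := by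
  have h1 := DirectSum.decompose_of_mem_same (fun n => ⋀[K]^n M) hi
  have h2 := DirectSum.decompose_of_mem_ne (fun n => ⋀[K]^n M) hj (Ne.symm hij)
  rw [← h1, h2]

end WedgeAux


set_option maxHeartbeats 1000000 in
open WedgeAux in
/-- Let `K` be a field of characteristic zero, `r` a natural number, `M` a
`K`-vector space with an ordered basis `v` of length `2r`, and `A` an alternating `2r × 2r`
matrix over `K`.  Set `σ := Σ_{i<j} A_{ij} · v_i ∧ v_j`.  Then `A` is invertible if and only
if `σ^r ≠ 0` in the exterior algebra of `M`. -/
theorem isUnit_iff_wedge_pow_ne_zero {K : Type*} [Field K] [CharZero K] (r : ℕ)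
    (M : Type*) [AddCommGroup M] [Module K M] (v : Module.Basis (Fin (2 * r)) K M)
    (A : Matrix (Fin (2 * r)) (Fin (2 * r)) K) (hAt : Aᵀ = -A) (hAd : ∀ i, A i i = 0) :
    IsUnit A ↔
      (∑ p ∈ Finset.univ.filter (fun p : Fin (2 * r) × Fin (2 * r) => p.1 < p.2),
          A p.1 p.2 • (ExteriorAlgebra.ι K (v p.1) * ExteriorAlgebra.ι K (v p.2))) ^ r ≠ 0 := by
  classical
  have hσeq : (∑ p ∈ Finset.univ.filter (fun p : Fin (2 * r) × Fin (2 * r) => p.1 < p.2),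
      A p.1 p.2 • (ExteriorAlgebra.ι K (v p.1) * ExteriorAlgebra.ι K (v p.2)))
      = WedgeAux.sigma v A := rfl
  rw [hσeq]
  set σ := WedgeAux.sigma v A with hσ
  have hone : (1 : ExteriorAlgebra K M) ≠ 0 := by
    intro h
    have := congrArg (ExteriorAlgebra.algebraMapInv (R := K) (M := M)) h
    rw [_root_.map_one, map_zero] at this
    exact one_ne_zero this
  constructor
  · -- invertible ⇒ σ^r ≠ 0
    intro hA h0
    have hr0 : r ≠ 0 := by rintro rfl; rw [pow_zero] at h0; exact hone h0
    have hex : ∃ m, σ ^ m = 0 := ⟨r, h0⟩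
    have hm₀ : σ ^ (Nat.find hex) = 0 := Nat.find_spec hex
    have hle : Nat.find hex ≤ r := Nat.find_min' hex h0
    have hpos : Nat.find hex ≠ 0 := by
      intro h
      rw [h, pow_zero] at hm₀
      exact hone hm₀
    set m₀ := Nat.find hex with hm₀def
    have hτ : σ ^ (m₀ - 1) ≠ 0 := Nat.find_min hex (by omega)
    have hdet : IsUnit A.det := (Matrix.isUnit_iff_isUnit_det A).mp hA
    have hkill : ∀ j : Fin (2 * r), ExteriorAlgebra.ι K (v j) * σ ^ (m₀ - 1) = 0 := by
      intro j
      set b : Fin (2 * r) → K := fun i => v.repr (v j) i with hb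
      set c : Fin (2 * r) → K := b ᵥ* A⁻¹ with hc
      have hcA : c ᵥ* A = b := by
        rw [hc, Matrix.vecMul_vecMul, Matrix.nonsing_inv_mul A hdet, Matrix.vecMul_one]
      have h1 : CliffordAlgebra.contractLeft (Q := (0 : QuadraticForm K M)) (fc v c) σ
          = ExteriorAlgebra.ι K (v j) := by
        rw [hσ, sigma_contract v A hAt hAd c, hcA]
        congr 1
        exact Module.Basis.sum_repr v (v j)
      have h2 : CliffordAlgebra.contractLeft (Q := (0 : QuadraticForm K M)) (fc v c) (σ ^ m₀)
          = 0 := by rw [hm₀, map_zero]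
      have h3 : σ ^ m₀ = σ ^ ((m₀ - 1) + 1) := by congr 1; omega
      rw [h3, hσ, sigma_contract_pow v A _ _ h1] at h2
      have hcast : (((m₀ - 1) + 1 : ℕ) : K) ≠ 0 := Nat.cast_ne_zero.mpr (by omega)
      rw [← hσ] at h2
      exact (smul_eq_zero.mp h2).resolve_left hcast
    obtain ⟨ρ, hρ⟩ := exists_eq_top_mul v _ hkill
    rw [top_mul] at hρ
    have hmem1 : σ ^ (m₀ - 1) ∈ ⋀[K]^(2 * (m₀ - 1)) M := by rw [hσ]; exact sigma_pow_mem v A _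
    have hmem2 : σ ^ (m₀ - 1) ∈ ⋀[K]^(2 * r) M := by
      rw [hρ]
      exact Submodule.smul_mem _ _ (partialTop_mem v)
    exact hτ (eq_zero_of_mem_ne (show 2 * (m₀ - 1) ≠ 2 * r by omega) hmem1 hmem2)
  · -- σ^r ≠ 0 ⇒ invertible
    intro hσr
    by_contra hA
    have hdet : A.det = 0 := by
      by_contra hd
      exact hA ((Matrix.isUnit_iff_isUnit_det A).mpr (isUnit_iff_ne_zero.mpr hd))
    obtain ⟨w, hw, hwA⟩ := (Matrix.exists_vecMul_eq_zero_iff).mpr hdet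
    obtain ⟨k, hk0⟩ := Function.ne_iff.mp hw
    have hk : w k ≠ 0 := by simpa using hk0
    have hr0 : r ≠ 0 := by rintro rfl; exact absurd k.isLt (by omega)
    have hfσ : CliffordAlgebra.contractLeft (Q := (0 : QuadraticForm K M)) (fc v w) σ
        = ExteriorAlgebra.ι K (0 : M) := by
      rw [hσ, sigma_contract v A hAt hAd w, hwA]
      congr 1
      simp
    have hpow0 : CliffordAlgebra.contractLeft (Q := (0 : QuadraticForm K M)) (fc v w) (σ ^ r)
        = 0 := by
      have hr' : σ ^ r = σ ^ ((r - 1) + 1) := by congr 1; omega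
      rw [hr', hσ, sigma_contract_pow v A _ _ hfσ, map_zero, zero_mul, smul_zero]
    have hkill : ∀ j : Fin (2 * r), ExteriorAlgebra.ι K (v j) * σ ^ r = 0 := by
      intro j
      have hmem : ExteriorAlgebra.ι K (v j) * σ ^ r ∈ ⋀[K]^(2 * r + 1) M := by
        have hps : (⋀[K]^(2 * r + 1) M)
            = LinearMap.range (ExteriorAlgebra.ι K : M →ₗ[K] ExteriorAlgebra K M)
              * ⋀[K]^(2 * r) M := pow_succ' _ _
        rw [hps]
        exact Submodule.mul_mem_mul (LinearMap.mem_range_self _ _) (hσ ▸ sigma_pow_mem v A r)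
      rw [exteriorPower_succ_eq_bot v, Submodule.mem_bot] at hmem
      exact hmem
    obtain ⟨ρ, hρ⟩ := exists_eq_top_mul v _ hkill
    rw [top_mul] at hρ
    have hT0 : ExteriorAlgebra.ι K (v k) * partialTop v 0 = 0 := by
      have h := prod_mul_ι (K := K) (v k) (List.ofFn v)
      unfold partialTop
      rw [List.drop_zero]
      exact ι_mem_mul_prod (v k) _ (by simp [List.mem_ofFn])
    have hTk : ExteriorAlgebra.ι K (v k) *
        (CliffordAlgebra.contractLeft (Q := (0 : QuadraticForm K M)) (fc v w)
          (partialTop v 0)) = w k • partialTop v 0 := by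
      have h2 := congrArg (CliffordAlgebra.contractLeft (Q := (0 : QuadraticForm K M))
        (fc v w)) hT0
      rw [map_zero, CliffordAlgebra.contractLeft_ι_mul, fc_apply, sub_eq_zero] at h2
      exact h2.symm
    have hzero : (0 : ExteriorAlgebra K M)
        = (ExteriorAlgebra.algebraMapInv ρ * w k) • partialTop v 0 := by
      have h3 : CliffordAlgebra.contractLeft (Q := (0 : QuadraticForm K M)) (fc v w) (σ ^ r)
          = ExteriorAlgebra.algebraMapInv ρ •
            CliffordAlgebra.contractLeft (Q := (0 : QuadraticForm K M)) (fc v w)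
              (partialTop v 0) := by
        rw [hρ, _root_.map_smul]
      calc (0 : ExteriorAlgebra K M)
          = ExteriorAlgebra.ι K (v k) * (CliffordAlgebra.contractLeft
              (Q := (0 : QuadraticForm K M)) (fc v w) (σ ^ r)) := by rw [hpow0, mul_zero]
        _ = ExteriorAlgebra.algebraMapInv ρ • (ExteriorAlgebra.ι K (v k) *
              CliffordAlgebra.contractLeft (Q := (0 : QuadraticForm K M)) (fc v w)
                (partialTop v 0)) := by rw [h3, mul_smul_comm]
        _ = (ExteriorAlgebra.algebraMapInv ρ * w k) • partialTop v 0 := by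
              rw [hTk, smul_smul]
    rcases smul_eq_zero.mp hzero.symm with h | h
    · rcases mul_eq_zero.mp h with h' | h'
      · exact hσr (by rw [hρ, h', zero_smul])
      · exact absurd h' hk
    · exact hσr (by rw [hρ, h, smul_zero])
end

section
/- Let R be a commutative ring, p an integer, and G → H → F → 0 a right exact sequence of R-modules with maps α : G → H and β : H → F. Then the sequence G ⊗ ∧^{p−1}H → ∧^p H → ∧^p F → 0 is exact, where the first map sends g ⊗ ω to α(g) ∧ ω and the second map is ∧^p β. -/
open ExteriorAlgebra

section Aux

variable {R G H F : Type*} [CommRing R]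
    [AddCommGroup G] [Module R G] [AddCommGroup H] [Module R H]
    [AddCommGroup F] [Module R F]
    (α : G →ₗ[R] H) (β : H →ₗ[R] F)

def auxK (p : ℕ) : Submodule R (ExteriorAlgebra R H) :=
  Submodule.span R {y : ExteriorAlgebra R H |
    ∃ (g : G) (ω : ExteriorAlgebra R H), ω ∈ ⋀[R]^p H ∧
      y = ExteriorAlgebra.ι R (α g) * ω}

lemma auxK_mem_zero (p : ℕ) (v : Fin (p + 1) → H) (g : G) (h0 : v 0 = α g) :
    ιMulti R (p + 1) v ∈ auxK α p := by
  rw [ιMulti_succ_apply, h0]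
  exact Submodule.subset_span
    ⟨g, _, ιMulti_range R p ⟨_, rfl⟩, rfl⟩

lemma auxK_mem (p : ℕ) (v : Fin (p + 1) → H) (i : Fin (p + 1)) (g : G) (hi : v i = α g) :
    ιMulti R (p + 1) v ∈ auxK α p := by
  by_cases h : i = 0
  · exact auxK_mem_zero α p v g (h ▸ hi)
  · have h1 : ιMulti R (p + 1) (v ∘ Equiv.swap 0 i) ∈ auxK α p := by
      apply auxK_mem_zero α p _ g
      simp [Equiv.swap_apply_left, hi]
    rw [AlternatingMap.map_swap _ _ (Ne.symm h)] at h1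
    simpa using neg_mem h1

lemma auxL2 (hexact : Function.Exact α β) (p : ℕ) {v w : Fin (p + 1) → H}
    (h : ∀ i, β (v i) = β (w i)) :
    (auxK α p).mkQ (ιMulti R (p + 1) v) = (auxK α p).mkQ (ιMulti R (p + 1) w) := by
  classical
  have key : ∀ s : Finset (Fin (p + 1)),
      (auxK α p).mkQ (ιMulti R (p + 1) (fun i => if i ∈ s then w i else v i)) =
      (auxK α p).mkQ (ιMulti R (p + 1) v) := by
    intro s
    induction s using Finset.induction_on with
    | empty => simp
    | @insert a s ha ih =>
      set u : Fin (p + 1) → H := fun i => if i ∈ s then w i else v i with hu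
      have hfu : (fun i => if i ∈ insert a s then w i else v i) =
          Function.update u a (w a) := by
        funext j
        by_cases hj : j = a
        · subst hj; simp [hu]
        · simp [hu, Function.update_of_ne hj, Finset.mem_insert, hj]
      rw [hfu]
      have hwa : w a = v a + (w a - v a) := by abel
      rw [hwa, AlternatingMap.map_update_add, map_add]
      have h2 : ιMulti R (p + 1) (Function.update u a (w a - v a)) ∈ auxK α p := by
        obtain ⟨g, hg⟩ := hexact (w a - v a) |>.mp (by simp [h a])
        exact auxK_mem α p _ a g (by simp [← hg])
      have h3 : (auxK α p).mkQ (ιMulti R (p + 1) (Function.update u a (w a - v a))) = 0 := by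
        rw [Submodule.mkQ_apply]; exact (Submodule.Quotient.mk_eq_zero _).mpr h2
      rw [h3]
      have hua : u a = v a := by simp [hu, ha]
      rw [← hua, Function.update_eq_self, add_zero]
      exact ih
  have := key Finset.univ
  simpa using this.symm


noncomputable def auxA (hexact : Function.Exact α β) (hsurj : Function.Surjective β) (p : ℕ) :
    F [⋀^Fin (p + 1)]→ₗ[R] (ExteriorAlgebra R H ⧸ auxK α p) where
  toFun f := (auxK α p).mkQ (ιMulti R (p + 1) (fun i => Function.surjInv hsurj (f i)))
  map_update_add' := by
    intro inst f i x y
    have e : ∀ z : F, (fun j => Function.surjInv hsurj (Function.update f i z j)) =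
        Function.update (fun j => Function.surjInv hsurj (f j)) i (Function.surjInv hsurj z) := by
      intro z; funext j
      by_cases hj : j = i
      · subst hj; simp
      · simp [Function.update_of_ne hj]
    simp only [e]
    have step : (auxK α p).mkQ (ιMulti R (p + 1)
          (Function.update (fun j => Function.surjInv hsurj (f j)) i
            (Function.surjInv hsurj (x + y)))) =
        (auxK α p).mkQ (ιMulti R (p + 1)
          (Function.update (fun j => Function.surjInv hsurj (f j)) i
            (Function.surjInv hsurj x + Function.surjInv hsurj y))) := by
      apply auxL2 α β hexact
      intro j
      by_cases hj : j = i
      · subst hj; simp [Function.surjInv_eq hsurj]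
      · simp [Function.update_of_ne hj]
    rw [step, AlternatingMap.map_update_add, map_add]
  map_update_smul' := by
    intro inst f i c x
    have e : ∀ z : F, (fun j => Function.surjInv hsurj (Function.update f i z j)) =
        Function.update (fun j => Function.surjInv hsurj (f j)) i (Function.surjInv hsurj z) := by
      intro z; funext j
      by_cases hj : j = i
      · subst hj; simp
      · simp [Function.update_of_ne hj]
    simp only [e]
    have step : (auxK α p).mkQ (ιMulti R (p + 1)
          (Function.update (fun j => Function.surjInv hsurj (f j)) i
            (Function.surjInv hsurj (c • x)))) =
        (auxK α p).mkQ (ιMulti R (p + 1)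
          (Function.update (fun j => Function.surjInv hsurj (f j)) i
            (c • Function.surjInv hsurj x))) := by
      apply auxL2 α β hexact
      intro j
      by_cases hj : j = i
      · subst hj; simp [Function.surjInv_eq hsurj]
      · simp [Function.update_of_ne hj]
    rw [step, AlternatingMap.map_update_smul, map_smul]
  map_eq_zero_of_eq' := by
    intro f i j hij hne
    have h0 : ιMulti R (p + 1) (fun k => Function.surjInv hsurj (f k)) = 0 :=
      AlternatingMap.map_eq_zero_of_eq _ (fun k => Function.surjInv hsurj (f k))
        (i := i) (j := j) (by simp [hij]) hne
    show (auxK α p).mkQ (ιMulti R (p + 1) (fun k => Function.surjInv hsurj (f k))) = 0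
    rw [h0, map_zero]

lemma auxA_apply (hexact : Function.Exact α β) (hsurj : Function.Surjective β) (p : ℕ)
    (f : Fin (p + 1) → F) :
    auxA α β hexact hsurj p f =
      (auxK α p).mkQ (ιMulti R (p + 1) (fun i => Function.surjInv hsurj (f i))) := rfl

noncomputable def auxL (hexact : Function.Exact α β) (hsurj : Function.Surjective β) (p : ℕ) :
    ExteriorAlgebra R F →ₗ[R] (ExteriorAlgebra R H ⧸ auxK α p) :=
  liftAlternating (Function.update (fun _ => 0) (p + 1) (auxA α β hexact hsurj p))

lemma auxL_main (hexact : Function.Exact α β) (hsurj : Function.Surjective β) (p : ℕ) :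
    ∀ x ∈ (⋀[R]^(p + 1) H : Submodule R (ExteriorAlgebra R H)),
      auxL α β hexact hsurj p (ExteriorAlgebra.map β x) = (auxK α p).mkQ x := by
  intro x hx
  rw [← ιMulti_span_fixedDegree] at hx
  induction hx using Submodule.span_induction with
  | mem x hmem =>
    obtain ⟨v, rfl⟩ := hmem
    rw [map_apply_ιMulti]
    have h1 : auxL α β hexact hsurj p (ιMulti R (p + 1) (β ∘ v)) =
        auxA α β hexact hsurj p (β ∘ v) := by
      rw [auxL, liftAlternating_apply_ιMulti, Function.update_self]
    rw [h1, auxA_apply]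
    exact auxL2 α β hexact p (fun i => by simp [Function.surjInv_eq hsurj])
  | zero => simp
  | add x y _ _ hx hy => simp [map_add, hx, hy]
  | smul c x _ hx => simp [map_smul, hx]

end Aux

/-- Let `R` be a commutative ring and `G →α H →β F → 0` a right exact
sequence of `R`-modules.  Then for every (positive) degree `p+1` the sequence
`G ⊗ ∧^p H → ∧^(p+1) H → ∧^(p+1) F → 0` is exact, where the first map sends `g ⊗ ω` to
`α(g) ∧ ω` and the second map is `∧^(p+1) β`.  Exterior powers are realized as the graded
pieces `⋀[R]^n` of the exterior algebra; the image of the first map is the span of the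
products `ι(α g) * ω` with `ω ∈ ⋀[R]^p H`, so exactness in the middle says that the kernel
of `∧ β` on `⋀[R]^(p+1) H` is that span, and exactness at the right-hand end says that
`∧ β` maps `⋀[R]^(p+1) H` onto `⋀[R]^(p+1) F`.  (In negative degrees and degree `0` the
statement is trivial by the conventions `∧^k = 0` for `k < 0`, `∧^0 = R`.) -/
theorem exteriorPower_right_exact {R G H F : Type*} [CommRing R]
    [AddCommGroup G] [Module R G] [AddCommGroup H] [Module R H]
    [AddCommGroup F] [Module R F]
    (α : G →ₗ[R] H) (β : H →ₗ[R] F)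
    (hexact : Function.Exact α β) (hsurj : Function.Surjective β) (p : ℕ) :
    (∀ x ∈ (⋀[R]^(p + 1) H : Submodule R (ExteriorAlgebra R H)),
        (ExteriorAlgebra.map β x = 0 ↔
          x ∈ Submodule.span R {y : ExteriorAlgebra R H |
            ∃ (g : G) (ω : ExteriorAlgebra R H), ω ∈ ⋀[R]^p H ∧
              y = ExteriorAlgebra.ι R (α g) * ω})) ∧
    Submodule.map (ExteriorAlgebra.map β).toLinearMap (⋀[R]^(p + 1) H) = ⋀[R]^(p + 1) F := by

  have hker : ∀ y ∈ auxK α p, ExteriorAlgebra.map β y = 0 := by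
    intro y hy
    induction hy using Submodule.span_induction with
    | mem y hy =>
      obtain ⟨g, ω, hω, rfl⟩ := hy
      have hβα : β (α g) = 0 := hexact.apply_apply_eq_zero g
      rw [map_mul, map_apply_ι, hβα, map_zero, zero_mul]
    | zero => simp
    | add y z _ _ hy hz => rw [map_add, hy, hz, add_zero]
    | smul c y _ hy => rw [map_smul, hy, smul_zero]
  constructor
  · intro x hx
    constructor
    · intro h0
      have hmain := auxL_main α β hexact hsurj p x hx
      rw [h0, map_zero] at hmain
      have : x ∈ auxK α p := by
        rwa [Submodule.mkQ_apply, eq_comm, Submodule.Quotient.mk_eq_zero] at hmain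
      exact this
    · intro hmem
      exact hker x hmem
  · show Submodule.map (ExteriorAlgebra.map β).toLinearMap
        (LinearMap.range (ι R : H →ₗ[R] ExteriorAlgebra R H) ^ (p + 1)) =
      LinearMap.range (ι R : F →ₗ[R] ExteriorAlgebra R F) ^ (p + 1)
    rw [Submodule.map_pow, ι_range_map_map, LinearMap.range_eq_top.mpr hsurj,
      Submodule.map_top]
end

section
/- Let A be a Noetherian commutative local ring with maximal-ideal-adic completion Â, and M a finitely generated A-module. Then M is a free A-module if and only if Â ⊗_A M is a free Â-module. -/
open scoped TensorProduct

section Aux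

variable {A : Type*} [CommRing A] [IsNoetherianRing A] [IsLocalRing A]

local notation "𝔪" => IsLocalRing.maximalIdeal A
local notation "B" => AdicCompletion (IsLocalRing.maximalIdeal A) A

/-- The adic completion of a Noetherian local ring is faithfully flat. -/
lemma faithfullyFlat_adicCompletion : Module.FaithfullyFlat A B := by
  refine { submodule_ne_top := ?_ }
  intro m hm htop
  rw [IsLocalRing.eq_maximalIdeal hm] at htop
  -- push to the first quotient via `eval`
  set e := AdicCompletion.eval 𝔪 A 1 with he
  have hmap : Submodule.map e (𝔪 • (⊤ : Submodule A B)) = Submodule.map e ⊤ := by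
    rw [htop]
  rw [Submodule.map_smul'', Submodule.map_top, AdicCompletion.range_eval] at hmap
  -- but `𝔪 • ⊤ = ⊥` in `A ⧸ 𝔪 ^ 1 • ⊤`
  have hbot : (𝔪 • (⊤ : Submodule A (A ⧸ ((𝔪 : Ideal A) ^ 1 • ⊤ : Submodule A A))) = ⊥) := by
    rw [Submodule.eq_bot_iff]
    intro x hx
    refine Submodule.smul_induction_on hx ?_ ?_
    · rintro r hr ⟨y⟩ -
      show r • Submodule.Quotient.mk y = 0
      rw [← Submodule.Quotient.mk_smul, Submodule.Quotient.mk_eq_zero]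
      rw [pow_one]
      exact Submodule.smul_mem_smul hr trivial
    · intro x y hx hy; rw [hx, hy, add_zero]
  rw [hbot] at hmap
  have : Subsingleton (A ⧸ ((𝔪 : Ideal A) ^ 1 • ⊤ : Submodule A A)) := by
    constructor
    intro a b
    have ha : a ∈ (⊥ : Submodule A _) := hmap ▸ Submodule.mem_top
    have hb : b ∈ (⊥ : Submodule A _) := hmap ▸ Submodule.mem_top
    rw [Submodule.mem_bot] at ha hb
    rw [ha, hb]
  rw [Submodule.Quotient.subsingleton_iff] at this
  have hle : ((𝔪 : Ideal A) ^ 1 • ⊤ : Submodule A A) ≤ 𝔪 := by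
    rw [pow_one]
    refine Submodule.smul_le.2 fun r hr a _ => ?_
    exact Ideal.mul_mem_right a _ hr
  rw [this] at hle
  exact (IsLocalRing.maximalIdeal.isMaximal A).ne_top (top_le_iff.mp hle)

/-- Faithfully flat modules reflect injectivity of linear maps. -/
lemma inj_of_lTensor_inj {R S N N' : Type*} [CommRing R]
    [AddCommGroup S] [Module R S] [Module.FaithfullyFlat R S]
    [AddCommGroup N] [Module R N] [AddCommGroup N'] [Module R N']
    (f : N →ₗ[R] N') (hinj : Function.Injective (LinearMap.lTensor S f)) :
    Function.Injective f := by
  rw [← LinearMap.ker_eq_bot, Submodule.eq_bot_iff]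
  intro x hx
  have hj : (LinearMap.ker f).subtype = 0 := by
    have hcomp : f.comp (LinearMap.ker f).subtype = 0 := by
      ext y; exact y.2
    have hcz : (LinearMap.lTensor S f).comp
        (LinearMap.lTensor S (LinearMap.ker f).subtype) = 0 := by
      rw [← LinearMap.lTensor_comp, hcomp, LinearMap.lTensor_zero]
    have h0 : LinearMap.lTensor S (LinearMap.ker f).subtype = 0 := by
      apply LinearMap.ext
      intro t
      apply hinj
      rw [← LinearMap.comp_apply, hcz]
      simp
    exact (Module.FaithfullyFlat.zero_iff_lTensor_zero R S
      ((LinearMap.ker f).subtype)).mpr h0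
  simpa using congrArg (fun g => g ⟨x, hx⟩) hj

/-- Faithfully flat descent of flatness (weak form): if `S` is a faithfully flat `R`-module
and `S ⊗[R] M` is flat as an `R`-module, then `M` is flat. -/
lemma Module.Flat.of_faithfullyFlat_lTensor {R S M : Type*} [CommRing R]
    [AddCommGroup S] [Module R S] [Module.FaithfullyFlat R S]
    [AddCommGroup M] [Module R M] [Module.Flat R (S ⊗[R] M)] :
    Module.Flat R M := by
  rw [Module.Flat.iff_rTensor_injective']
  intro I
  refine inj_of_lTensor_inj (S := S) _ ?_
  have hcomm :
      (LinearMap.rTensor (S ⊗[R] M) I.subtype).comp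
          (TensorProduct.leftComm R S I M).toLinearMap =
        (TensorProduct.leftComm R S R M).toLinearMap.comp
          (LinearMap.lTensor S (LinearMap.rTensor M I.subtype)) := by
    ext b x m
    rfl
  have h1 : Function.Injective (LinearMap.rTensor (S ⊗[R] M) I.subtype) :=
    Module.Flat.rTensor_preserves_injective_linearMap _ Subtype.val_injective
  intro x y hxy
  apply (TensorProduct.leftComm R S I M).injective
  apply h1
  have hx := LinearMap.congr_fun hcomm x
  have hy := LinearMap.congr_fun hcomm y
  simp only [LinearMap.comp_apply, LinearEquiv.coe_coe] at hx hy
  rw [hx, hy, hxy]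

end Aux

/-- Let `A` be a Noetherian commutative local ring with maximal-ideal-adic
completion `Â`, and `M` a finitely generated `A`-module.  Then `M` is a free `A`-module if
and only if `Â ⊗[A] M` is a free `Â`-module. -/
theorem free_iff_free_adicCompletion_tensor {A : Type*} [CommRing A] [IsNoetherianRing A]
    [IsLocalRing A] (M : Type*) [AddCommGroup M] [Module A M] [Module.Finite A M] :
    Module.Free A M ↔
      Module.Free (AdicCompletion (IsLocalRing.maximalIdeal A) A)
        ((AdicCompletion (IsLocalRing.maximalIdeal A) A) ⊗[A] M) := by
  set B := AdicCompletion (IsLocalRing.maximalIdeal A) A with hB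
  constructor
  · intro h
    infer_instance
  · intro h
    have hff : Module.FaithfullyFlat A B := faithfullyFlat_adicCompletion
    have hflatB : Module.Flat B (B ⊗[A] M) := Module.Flat.of_free
    have hflatA : Module.Flat A (B ⊗[A] M) := Module.Flat.trans A B (B ⊗[A] M)
    have hMflat : Module.Flat A M := Module.Flat.of_faithfullyFlat_lTensor (S := B)
    have : Module.FinitePresentation A M := Module.finitePresentation_of_finite A M
    exact Module.free_of_flat_of_isLocalRing
end

section
/- Let ((A_k, M_k))_{k∈ℕ} be an inverse system where each A_k is a commutative local ring and M_k a finite free A_k-module, with transition data for l ≤ m consisting of a surjective ring homomorphism θ_{l,m} : A_m → A_l carrying the maximal ideal of A_m into the maximal ideal of A_l, and a θ_{l,m}-semilinear map φ_{l,m} : M_m → M_l such that the induced A_l-linear map A_l ⊗_{A_m} M_m → M_l is an isomorphism. Let (A_∞, M_∞) be the inverse limit. Then M_∞ is a finite free A_∞-module, and for every l the induced map A_l ⊗_{A_∞} M_∞ → M_l is an isomorphism. -/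
open Module Submodule Function in
private lemma exists_basis_of_span_of_finrank {R N : Type*} [CommRing R] [AddCommGroup N]
    [Module R N] [Nontrivial R] [Module.Finite R N] [Module.Free R N] {n : ℕ}
    (hn : Module.finrank R N = n)
    (v : Fin n → N) (hspan : Submodule.span R (Set.range v) = ⊤) :
    ∃ b : Basis (Fin n) R N, ∀ i, b i = v i := by
  classical
  set f : (Fin n → R) →ₗ[R] N := Fintype.linearCombination R v with hfdef
  have hfa : ∀ c : Fin n → R, f c = ∑ i, c i • v i := fun c => rfl
  have hf : Function.Surjective f := by
    intro y
    obtain ⟨c, hc⟩ := mem_span_range_iff_exists_fun R |>.mp (hspan ▸ Submodule.mem_top (x := y))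
    exact ⟨c, by rw [hfa, hc]⟩
  have e : N ≃ₗ[R] (Fin n → R) := ((Module.finBasis R N).reindex (finCongr hn)).equivFun
  have hg : Function.Surjective (f ∘ₗ (e : N →ₗ[R] (Fin n → R))) := by
    intro y; obtain ⟨c, hc⟩ := hf y; exact ⟨e.symm c, by simpa using hc⟩
  have hinj := OrzechProperty.injective_of_surjective_endomorphism _ hg
  have hfinj : Function.Injective f := by
    intro a b hab
    have h2 : (f ∘ₗ (e : N →ₗ[R] (Fin n → R))) (e.symm a)
        = (f ∘ₗ (e : N →ₗ[R] (Fin n → R))) (e.symm b) := by simpa using hab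
    have := hinj h2
    simpa using this
  have hli : LinearIndependent R v := by
    rw [Fintype.linearIndependent_iff]
    intro g hg0 i
    have : f g = f 0 := by rw [hfa, hg0]; simp
    rw [hfinj this]; rfl
  exact ⟨Basis.mk hli hspan.ge, fun i => Basis.mk_apply hli hspan.ge i⟩


section

variable {A : ℕ → Type*} [∀ k, CommRing (A k)]
variable (θ : ∀ l m : ℕ, l ≤ m → A m →+* A l)

/-- The inverse limit `A_∞ = lim A_k` of an inverse system of commutative rings indexed by
`ℕ`, realized as the subring of compatible families in `Π_k A_k`. -/
def ringLimit : Subring (∀ k, A k) where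
  carrier := {f | ∀ (l m : ℕ) (h : l ≤ m), θ l m h (f m) = f l}
  mul_mem' := by
    intro a b ha hb l m h
    simp only [Pi.mul_apply, map_mul]
    rw [ha l m h, hb l m h]
  one_mem' := by intro l m h; simp
  add_mem' := by
    intro a b ha hb l m h
    simp only [Pi.add_apply, map_add]
    rw [ha l m h, hb l m h]
  zero_mem' := by intro l m h; simp
  neg_mem' := by
    intro a ha l m h
    simp only [Pi.neg_apply, map_neg]
    rw [ha l m h]

variable {M : ℕ → Type*} [∀ k, AddCommGroup (M k)] [∀ k, Module (A k) (M k)]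
variable (φ : ∀ (l m : ℕ) (h : l ≤ m), M m →ₛₗ[θ l m h] M l)

/-- The inverse limit `M_∞ = lim M_k` of an inverse system of modules over an inverse system
of rings, realized as the additive subgroup of compatible families in `Π_k M_k`. -/
def moduleLimit : AddSubgroup (∀ k, M k) where
  carrier := {x | ∀ (l m : ℕ) (h : l ≤ m), φ l m h (x m) = x l}
  add_mem' := by
    intro a b ha hb l m h
    simp only [Pi.add_apply, map_add]
    rw [ha l m h, hb l m h]
  zero_mem' := by intro l m h; simp
  neg_mem' := by
    intro a ha l m h
    simp only [Pi.neg_apply, map_neg]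
    rw [ha l m h]

instance ringLimit.smul : SMul (ringLimit θ) (moduleLimit θ φ) where
  smul c x := ⟨fun k => (c : ∀ k, A k) k • (x : ∀ k, M k) k, by
    intro l m h
    show φ l m h ((c : ∀ k, A k) m • (x : ∀ k, M k) m) = _
    rw [map_smulₛₗ, c.2 l m h, x.2 l m h]⟩

/-- The limit module `M_∞` is a module over the limit ring `A_∞`. -/
instance ringLimit.module : Module (ringLimit θ) (moduleLimit θ φ) where
  one_smul x := Subtype.ext (funext fun k => one_smul _ _)
  mul_smul a b x := Subtype.ext (funext fun k => mul_smul _ _ _)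
  smul_zero a := Subtype.ext (funext fun k => smul_zero _)
  smul_add a x y := Subtype.ext (funext fun k => smul_add _ _ _)
  add_smul a b x := Subtype.ext (funext fun k => add_smul _ _ _)
  zero_smul x := Subtype.ext (funext fun k => zero_smul _ _)

/-- Let `((A_k, M_k))_{k∈ℕ}` be an inverse system where each `A_k` is a
commutative local ring and `M_k` a finite free `A_k`-module, with transition data for
`l ≤ m` consisting of a surjective ring homomorphism `θ_{l,m} : A_m → A_l` carrying the
maximal ideal of `A_m` into the maximal ideal of `A_l`, and a `θ_{l,m}`-semilinear map
`φ_{l,m} : M_m → M_l` such that the induced `A_l`-linear map `A_l ⊗_{A_m} M_m → M_l` is an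
isomorphism (which, `θ_{l,m}` being surjective, is encoded by: `φ_{l,m}` is surjective and
its kernel is `(ker θ_{l,m})·M_m`).  Let `(A_∞, M_∞)` be the inverse limit.  Then `M_∞` is
a finite free `A_∞`-module, and for every `l` the induced map `A_l ⊗_{A_∞} M_∞ → M_l` is an
isomorphism (encoded likewise: the projection `M_∞ → M_l` is surjective with kernel
`(ker (A_∞ → A_l))·M_∞`). -/
theorem moduleLimit_finite_free [∀ k, IsLocalRing (A k)]
    [∀ k, Module.Free (A k) (M k)] [∀ k, Module.Finite (A k) (M k)]
    (hθsurj : ∀ (l m : ℕ) (h : l ≤ m), Function.Surjective (θ l m h))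
    (hθmax : ∀ (l m : ℕ) (h : l ≤ m), ∀ a ∈ IsLocalRing.maximalIdeal (A m),
      θ l m h a ∈ IsLocalRing.maximalIdeal (A l))
    (hθid : ∀ (k : ℕ) (a : A k), θ k k le_rfl a = a)
    (hθcomp : ∀ (l m n : ℕ) (h1 : l ≤ m) (h2 : m ≤ n) (a : A n),
      θ l m h1 (θ m n h2 a) = θ l n (h1.trans h2) a)
    (hφid : ∀ (k : ℕ) (x : M k), φ k k le_rfl x = x)
    (hφcomp : ∀ (l m n : ℕ) (h1 : l ≤ m) (h2 : m ≤ n) (x : M n),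
      φ l m h1 (φ m n h2 x) = φ l n (h1.trans h2) x)
    (hbc : ∀ (l m : ℕ) (h : l ≤ m),
      Function.Surjective (φ l m h) ∧
        ∀ x : M m, φ l m h x = 0 ↔
          x ∈ RingHom.ker (θ l m h) • (⊤ : Submodule (A m) (M m))) :
    (Module.Finite (ringLimit θ) (moduleLimit θ φ) ∧
        Module.Free (ringLimit θ) (moduleLimit θ φ)) ∧
      ∀ l : ℕ,
        Function.Surjective (fun x : moduleLimit θ φ => (x : ∀ k, M k) l) ∧
          ∀ x : moduleLimit θ φ, (x : ∀ k, M k) l = 0 ↔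
            x ∈ RingHom.ker ((Pi.evalRingHom A l).comp (ringLimit θ).subtype) •
              (⊤ : Submodule (ringLimit θ) (moduleLimit θ φ)) := by
  classical
  set n := Module.finrank (A 0) (M 0) with hn0
  -- general compatibility from consecutive compatibility
  have compat : ∀ (x : ∀ k, M k), (∀ k, φ k (k+1) (Nat.le_succ k) (x (k+1)) = x k) →
      ∀ (l m : ℕ) (h : l ≤ m), φ l m h (x m) = x l := by
    intro x hx l m
    induction m with
    | zero => intro h; obtain rfl : l = 0 := Nat.le_zero.mp h; exact hφid 0 (x 0)
    | succ m ih =>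
      intro h
      rcases eq_or_lt_of_le h with rfl | h1
      · exact hφid _ _
      · have h2 : l ≤ m := Nat.lt_succ_iff.mp h1
        rw [← hφcomp l m (m+1) h2 (Nat.le_succ m) (x (m+1)), hx m]
        exact ih h2
  -- kernel of θ is contained in the maximal ideal
  have hkerle : ∀ (l m : ℕ) (h : l ≤ m),
      RingHom.ker (θ l m h) ≤ IsLocalRing.maximalIdeal (A m) := by
    intro l m h a ha
    rw [IsLocalRing.mem_maximalIdeal, mem_nonunits_iff]
    intro hu
    have h1 : IsUnit (θ l m h a) := hu.map _
    rw [RingHom.mem_ker.mp ha] at h1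
    exact not_isUnit_zero h1
  -- lifts of a basis along φ span (Nakayama)
  have hspan_lift : ∀ (m : ℕ) {r : ℕ} (b : Module.Basis (Fin r) (A m) (M m)) (w : Fin r → M (m+1)),
      (∀ i, φ m (m+1) (Nat.le_succ m) (w i) = b i) →
      Submodule.span (A (m+1)) (Set.range w) = ⊤ := by
    intro m r b w hw
    have hk := Nat.le_succ m
    rw [eq_top_iff]
    refine Submodule.le_of_le_smul_of_le_jacobson_bot Module.Finite.fg_top
      ((IsLocalRing.jacobson_eq_maximalIdeal (R := A (m+1)) ⊥ bot_ne_top).ge) ?_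
    intro z _
    choose d hd using fun i => hθsurj m (m+1) hk ((b.repr (φ m (m+1) hk z)) i)
    have hzero : φ m (m+1) hk (z - ∑ i, d i • w i) = 0 := by
      rw [map_sub, map_sum]
      simp_rw [map_smulₛₗ, hd, hw]
      rw [b.sum_repr (φ m (m+1) hk z), sub_self]
    have hmem : z - ∑ i, d i • w i ∈
        (IsLocalRing.maximalIdeal (A (m+1))) • (⊤ : Submodule (A (m+1)) (M (m+1))) :=
      Submodule.smul_mono_left (hkerle m (m+1) hk) (((hbc m (m+1) hk).2 _).mp hzero)
    exact Submodule.mem_sup.mpr ⟨∑ i, d i • w i,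
      Submodule.sum_mem _ (fun i _ => Submodule.smul_mem _ _ (Submodule.subset_span ⟨i, rfl⟩)),
      _, hmem, by abel⟩
  -- images of a basis along φ span
  have hspan_down : ∀ (m : ℕ) {r : ℕ} (B : Module.Basis (Fin r) (A (m+1)) (M (m+1))),
      Submodule.span (A m) (Set.range (fun i => φ m (m+1) (Nat.le_succ m) (B i))) = ⊤ := by
    intro m r B
    rw [eq_top_iff]
    rintro y -
    obtain ⟨z, rfl⟩ := (hbc m (m+1) (Nat.le_succ m)).1 y
    rw [← B.sum_repr z, map_sum]
    simp_rw [map_smulₛₗ]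
    exact Submodule.sum_mem _ fun i _ => Submodule.smul_mem _ _ (Submodule.subset_span ⟨i, rfl⟩)
  -- the finrank is constant
  have hrank : ∀ k, Module.finrank (A k) (M k) = n := by
    intro k; induction k with
    | zero => exact hn0.symm
    | succ k ih =>
      rw [← ih]
      apply le_antisymm
      · have b := Module.finBasis (A k) (M k)
        choose w hw using fun i => (hbc k (k+1) (Nat.le_succ k)).1 (b i)
        simpa using finrank_le_of_span_eq_top (hspan_lift k b w hw)
      · have B := Module.finBasis (A (k+1)) (M (k+1))
        simpa using finrank_le_of_span_eq_top (hspan_down k B)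
  -- lifting bases step by step
  have hstep : ∀ (k : ℕ) (b : Module.Basis (Fin n) (A k) (M k)),
      ∃ b' : Module.Basis (Fin n) (A (k+1)) (M (k+1)),
        ∀ i, φ k (k+1) (Nat.le_succ k) (b' i) = b i := by
    intro k b
    choose w hw using fun i => (hbc k (k+1) (Nat.le_succ k)).1 (b i)
    obtain ⟨b', hb'⟩ := exists_basis_of_span_of_finrank (hrank (k+1)) w (hspan_lift k b w hw)
    exact ⟨b', fun i => by rw [hb' i, hw i]⟩
  choose S hS using hstep
  -- the compatible system of bases
  let e : ∀ k, Module.Basis (Fin n) (A k) (M k) :=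
    fun k => Nat.rec (Module.finBasisOfFinrankEq (A 0) (M 0) (hrank 0)) (fun k b => S k b) k
  have he : ∀ k i, φ k (k+1) (Nat.le_succ k) (e (k+1) i) = e k i := fun k i => hS k (e k) i
  have hec : ∀ (l m : ℕ) (h : l ≤ m) (i : Fin n), φ l m h (e m i) = e l i :=
    fun l m h i => compat (fun k => e k i) (fun k => he k i) l m h
  -- elements of the limit
  let bb : Fin n → moduleLimit θ φ := fun i => ⟨fun k => e k i, fun l m h => hec l m h i⟩
  -- coordinates
  have hrepr : ∀ (x : moduleLimit θ φ) (l m : ℕ) (h : l ≤ m) (i : Fin n),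
      θ l m h ((e m).repr ((x : ∀ k, M k) m) i) = (e l).repr ((x : ∀ k, M k) l) i := by
    intro x l m h i
    have h1 : (x : ∀ k, M k) l = ∑ j, θ l m h ((e m).repr ((x : ∀ k, M k) m) j) • e l j := by
      conv_lhs => rw [← x.2 l m h, ← (e m).sum_repr ((x : ∀ k, M k) m)]
      rw [map_sum]
      simp_rw [map_smulₛₗ, hec l m h]
    rw [h1]
    exact (congrFun ((e l).repr_sum_self
      (fun j => θ l m h ((e m).repr ((x : ∀ k, M k) m) j))) i).symm
  let cc : moduleLimit θ φ → Fin n → ringLimit θ :=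
    fun x i => ⟨fun k => (e k).repr ((x : ∀ k, M k) k) i, fun l m h => hrepr x l m h i⟩
  -- coercion of sums
  have hcoe_sum : ∀ (f : Fin n → moduleLimit θ φ) (k : ℕ),
      ((∑ i, f i : moduleLimit θ φ) : ∀ k, M k) k = ∑ i, ((f i : ∀ k, M k) k) := by
    intro f k
    rw [AddSubmonoidClass.coe_finset_sum]
    exact Finset.sum_apply k _ _
  have hxsum : ∀ x : moduleLimit θ φ, x = ∑ i, cc x i • bb i := by
    intro x
    apply Subtype.ext; funext k
    rw [hcoe_sum]
    have : ∀ i, ((cc x i • bb i : moduleLimit θ φ) : ∀ k, M k) k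
        = (e k).repr ((x : ∀ k, M k) k) i • e k i := fun i => rfl
    simp_rw [this]
    exact ((e k).sum_repr _).symm
  -- basis of the limit
  have hli : LinearIndependent (ringLimit θ) bb := by
    rw [Fintype.linearIndependent_iff]
    intro g hg i
    apply Subtype.ext; funext k
    have h0 : ∑ j, ((g j : ∀ k, A k) k) • e k j = (0 : M k) := by
      have h1 := congrArg (fun z : moduleLimit θ φ => (z : ∀ k, M k) k) hg
      rw [hcoe_sum] at h1
      exact h1
    exact Fintype.linearIndependent_iff.mp (e k).linearIndependent _ h0 i
  have hsp : ⊤ ≤ Submodule.span (ringLimit θ) (Set.range bb) := by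
    intro x _
    rw [Submodule.mem_span_range_iff_exists_fun]
    exact ⟨cc x, (hxsum x).symm⟩
  have B := Module.Basis.mk hli hsp
  refine ⟨⟨Module.Finite.of_basis B, Module.Free.of_basis B⟩, ?_⟩
  intro l
  have hkercoe : ∀ r : ringLimit θ,
      r ∈ RingHom.ker ((Pi.evalRingHom A l).comp (ringLimit θ).subtype) ↔
        (r : ∀ k, A k) l = 0 := fun r => Iff.rfl
  constructor
  · -- surjectivity
    intro y
    have hs : ∀ k, Function.Surjective (φ k (k+1) (Nat.le_succ k)) :=
      fun k => (hbc k (k+1) (Nat.le_succ k)).1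
    let U : ∀ j, M (l + j) :=
      fun j => Nat.rec y (fun j z => Function.surjInv (hs (l + j)) z) j
    have hU : ∀ j, φ (l+j) (l+j+1) (Nat.le_succ _) (U (j+1)) = U j :=
      fun j => Function.surjInv_eq (hs (l+j)) (U j)
    have hUy : ∀ j, φ l (l+j) (Nat.le_add_right l j) (U j) = y := by
      intro j; induction j with
      | zero => exact hφid l y
      | succ j ih =>
        have h3 := hφcomp l (l+j) (l+j+1) (Nat.le_add_right l j) (Nat.le_succ (l+j)) (U (j+1))
        rw [hU j] at h3
        exact h3.symm.trans ih
    refine ⟨⟨fun k => φ k (l + k) (Nat.le_add_left k l) (U k), compat _ ?_⟩, hUy l⟩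
    intro k
    show φ k (k+1) (Nat.le_succ k) (φ (k+1) (l+(k+1)) (Nat.le_add_left (k+1) l) (U (k+1)))
      = φ k (l+k) (Nat.le_add_left k l) (U k)
    rw [hφcomp k (k+1) (l+(k+1)) (Nat.le_succ k) (Nat.le_add_left (k+1) l)]
    have h4 := hφcomp k (l+k) (l+k+1) (Nat.le_add_left k l) (Nat.le_succ (l+k)) (U (k+1))
    rw [hU k] at h4
    exact h4.symm
  · intro x
    constructor
    · intro hxl
      rw [hxsum x]
      apply Submodule.sum_mem
      intro i _
      refine Submodule.smul_mem_smul ?_ Submodule.mem_top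
      rw [hkercoe]
      show (e l).repr ((x : ∀ k, M k) l) i = 0
      rw [hxl]; simp
    · intro hx
      refine Submodule.smul_induction_on hx ?_ ?_
      · intro r hr m _
        show (r : ∀ k, A k) l • (m : ∀ k, M k) l = 0
        rw [(hkercoe r).mp hr, zero_smul]
      · intro a b ha hb
        show (a : ∀ k, M k) l + (b : ∀ k, M k) l = 0
        rw [ha, hb, add_zero]


end
end

section
/- Let B → B' be a surjective homomorphism of commutative rings with kernel J, let B → A be a ring homomorphism making A a flat B-module, set A' := A ⊗_B B', and let I be the kernel of the canonical map A → A'. Then for every natural number m, the canonical map (A/I) ⊗_{B/J} (J^m/J^{m+1}) → I^m/I^{m+1} is bijective. -/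
open scoped TensorProduct

section

variable (B B' A : Type*) [CommRing B] [CommRing B'] [CommRing A]
  [Algebra B B'] [Algebra B A]

/-- The kernel `J` of the ring homomorphism `B → B'`. -/
noncomputable abbrev kerJ : Ideal B := RingHom.ker (algebraMap B B')

/-- The kernel `I` of the canonical map `A → A' = A ⊗[B] B'`. -/
noncomputable abbrev kerI : Ideal A :=
  RingHom.ker (Algebra.TensorProduct.includeLeftRingHom : A →+* A ⊗[B] B')

lemma kerJ_le_comap : kerJ B B' ≤ (kerI B B' A).comap (algebraMap B A) := by
  intro j hj
  have hj0 : algebraMap B B' j = 0 := hj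
  simp only [Ideal.mem_comap, kerI, RingHom.mem_ker,
    Algebra.TensorProduct.includeLeftRingHom_apply]
  have : (algebraMap B A j) ⊗ₜ[B] (1 : B') = (1 : A) ⊗ₜ[B] (algebraMap B B' j) := by
    rw [Algebra.algebraMap_eq_smul_one, Algebra.algebraMap_eq_smul_one,
      TensorProduct.smul_tmul]
  rw [this, hj0, TensorProduct.tmul_zero]

/-- The induced ring homomorphism `B/J → A/I`. -/
noncomputable def resQuot : B ⧸ kerJ B B' →+* A ⧸ kerI B B' A :=
  Ideal.quotientMap (kerI B B' A) (algebraMap B A) (kerJ_le_comap B B' A)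

noncomputable instance : Algebra (B ⧸ kerJ B B') (A ⧸ kerI B B' A) :=
  (resQuot B B' A).toAlgebra

lemma algebraMap_mem_pow_kerI (m : ℕ) {b : B} (hb : b ∈ kerJ B B' ^ m) :
    algebraMap B A b ∈ kerI B B' A ^ m := by
  have h1 : Ideal.map (algebraMap B A) (kerJ B B' ^ m) ≤ kerI B B' A ^ m := by
    rw [Ideal.map_pow]
    exact Ideal.pow_right_mono (Ideal.map_le_iff_le_comap.mpr (kerJ_le_comap B B' A)) m
  exact h1 (Ideal.mem_map_of_mem _ hb)

variable (m : ℕ)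

/-- `J^m/J^{m+1}`, realized as `J^m ⧸ J•(J^m)`, as a module over `B/J`. -/
noncomputable abbrev grJ :=
  ↥(kerJ B B' ^ m) ⧸ (kerJ B B' • ⊤ : Submodule B ↥(kerJ B B' ^ m))

/-- `I^m/I^{m+1}`, realized as `I^m ⧸ I•(I^m)`, as a module over `A/I`, hence over `B/J`. -/
noncomputable abbrev grI :=
  ↥(kerI B B' A ^ m) ⧸ (kerI B B' A • ⊤ : Submodule A ↥(kerI B B' A ^ m))

noncomputable instance : Module (B ⧸ kerJ B B') (grI B B' A m) :=
  Module.compHom _ (resQuot B B' A)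


lemma kerI_eq_map (hsurj : Function.Surjective (algebraMap B B')) :
    kerI B B' A = Ideal.map (algebraMap B A) (kerJ B B') := by
  classical
  set J := kerJ B B' with hJ
  let e0 : (B ⧸ J) ≃+* B' := RingHom.quotientKerEquivOfSurjective hsurj
  have he0 : ∀ b : B, e0 (Ideal.Quotient.mk J b) = algebraMap B B' b := fun b => rfl
  let e : (B ⧸ J) ≃ₗ[B] B' :=
    { e0 with
      map_smul' := by
        intro b x
        obtain ⟨y, rfl⟩ := Ideal.Quotient.mk_surjective x
        have : b • (Ideal.Quotient.mk J y) = Ideal.Quotient.mk J (b * y) := rfl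
        rw [this]
        show e0 _ = b • e0 _
        rw [he0, he0, map_mul, Algebra.smul_def] }
  have hesymm : e.symm (1 : B') = Ideal.Quotient.mk J 1 := by
    apply e.injective
    simp only [LinearEquiv.apply_symm_apply]
    show (1 : B') = e0 (Ideal.Quotient.mk J 1)
    rw [he0, map_one]
  let F : (A ⊗[B] B') ≃ₗ[B] A ⧸ (J • (⊤ : Submodule B A)) :=
    (TensorProduct.congr (LinearEquiv.refl B A) e).symm ≪≫ₗ
      TensorProduct.tensorQuotEquivQuotSMul A J
  have hF : ∀ x : A, F (x ⊗ₜ (1 : B')) = Submodule.Quotient.mk x := by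
    intro x
    simp only [F, LinearEquiv.trans_apply, TensorProduct.congr_symm_tmul,
      LinearEquiv.refl_symm, LinearEquiv.refl_apply, hesymm,
      TensorProduct.tensorQuotEquivQuotSMul_tmul_mk, one_smul]
  ext x
  have hx0 : x ∈ kerI B B' A ↔ x ⊗ₜ[B] (1 : B') = 0 := Iff.rfl
  rw [hx0]
  constructor
  · intro h
    have : F (x ⊗ₜ (1 : B')) = 0 := by rw [h, map_zero]
    rw [hF, Submodule.Quotient.mk_eq_zero] at this
    rw [Ideal.smul_top_eq_map] at this
    exact this
  · intro h
    have hm : x ∈ J • (⊤ : Submodule B A) := by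
      rw [Ideal.smul_top_eq_map]; exact h
    have : F (x ⊗ₜ (1 : B')) = 0 := by
      rw [hF, Submodule.Quotient.mk_eq_zero]; exact hm
    have := congrArg F.symm this
    rwa [LinearEquiv.symm_apply_apply, map_zero] at this


/-- The canonical `A`-linear map `A ⊗[B] J^m → A`. -/
noncomputable def iotaMap : A ⊗[B] ↥(kerJ B B' ^ m) →ₗ[A] A :=
  (Algebra.TensorProduct.rid B A A).toLinearMap ∘ₗ
    LinearMap.baseChange A (Submodule.subtype (kerJ B B' ^ m : Ideal B))

lemma iotaMap_tmul (a : A) (b : ↥(kerJ B B' ^ m)) :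
    iotaMap B B' A m (a ⊗ₜ b) = a * algebraMap B A (b : B) := by
  simp only [iotaMap, LinearMap.coe_comp, Function.comp_apply, LinearMap.baseChange_tmul,
    Submodule.coe_subtype, AlgEquiv.toLinearMap_apply, Algebra.TensorProduct.rid_tmul,
    Algebra.smul_def]
  rw [mul_comm]

/-- The additive map `A ⊗[B] J^m → (A/I) ⊗[B/J] (J^m / J•J^m)`. -/
noncomputable def muMap :
    A ⊗[B] ↥(kerJ B B' ^ m) →+ ((A ⧸ kerI B B' A) ⊗[B ⧸ kerJ B B'] grJ B B' m) :=
  TensorProduct.liftAddHom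
    { toFun := fun a =>
        { toFun := fun b => Ideal.Quotient.mk (kerI B B' A) a ⊗ₜ[B ⧸ kerJ B B']
            (Submodule.Quotient.mk b : grJ B B' m)
          map_zero' := by
            simp only [Submodule.Quotient.mk_zero, TensorProduct.tmul_zero]
          map_add' := fun b₁ b₂ => by
            simp only [Submodule.Quotient.mk_add, TensorProduct.tmul_add] }
      map_zero' := by
        ext b
        simp only [AddMonoidHom.coe_mk, ZeroHom.coe_mk, map_zero, AddMonoidHom.zero_apply,
          TensorProduct.zero_tmul]
      map_add' := fun a₁ a₂ => by
        ext b
        simp only [AddMonoidHom.coe_mk, ZeroHom.coe_mk, map_add, AddMonoidHom.add_apply,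
          TensorProduct.add_tmul] }
    (by
      intro r a b
      show (Ideal.Quotient.mk (kerI B B' A) (r • a)) ⊗ₜ[B ⧸ kerJ B B']
          (Submodule.Quotient.mk b : grJ B B' m) =
        (Ideal.Quotient.mk (kerI B B' A) a) ⊗ₜ[B ⧸ kerJ B B']
          (Submodule.Quotient.mk (r • b) : grJ B B' m)
      have h1 : Ideal.Quotient.mk (kerI B B' A) (r • a) =
          (Ideal.Quotient.mk (kerJ B B') r) • Ideal.Quotient.mk (kerI B B' A) a := by
        rw [Algebra.smul_def (A := A ⧸ kerI B B' A), RingHom.algebraMap_toAlgebra,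
          resQuot, Ideal.quotientMap_mk, Algebra.smul_def, map_mul]
      have h2 : (Submodule.Quotient.mk (r • b) : grJ B B' m) =
          (Ideal.Quotient.mk (kerJ B B') r) • (Submodule.Quotient.mk b : grJ B B' m) := rfl
      rw [h1, h2, TensorProduct.smul_tmul])

lemma muMap_tmul (a : A) (b : ↥(kerJ B B' ^ m)) :
    muMap B B' A m (a ⊗ₜ b) = Ideal.Quotient.mk (kerI B B' A) a ⊗ₜ[B ⧸ kerJ B B']
      (Submodule.Quotient.mk b : grJ B B' m) := rfl

set_option maxHeartbeats 2000000 in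
/-- Let `B → B'` be a surjective homomorphism of commutative rings with
kernel `J`, let `B → A` be a ring homomorphism making `A` a flat `B`-module, set
`A' := A ⊗[B] B'`, and let `I` be the kernel of the canonical map `A → A'`.  Then for every
natural number `m`, the canonical map `(A/I) ⊗_{B/J} (J^m/J^{m+1}) → I^m/I^{m+1}`,
`a ⊗ j ↦ class of a·j`, is bijective. -/
theorem tensor_ker_graded_bijective [Module.Flat B A]
    (hsurj : Function.Surjective (algebraMap B B'))
    (Ψ : ((A ⧸ kerI B B' A) ⊗[B ⧸ kerJ B B'] grJ B B' m) →ₗ[B ⧸ kerJ B B']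
      grI B B' A m)
    (hΨ : ∀ (a : A) (b : ↥(kerJ B B' ^ m)),
      Ψ (Ideal.Quotient.mk (kerI B B' A) a ⊗ₜ Submodule.Quotient.mk b) =
        Submodule.Quotient.mk
          ⟨a * algebraMap B A (b : B),
            Ideal.mul_mem_left _ a (algebraMap_mem_pow_kerI B B' A m b.2)⟩) :
    Function.Bijective Ψ := by
  classical
  have hIJ : kerI B B' A = Ideal.map (algebraMap B A) (kerJ B B') :=
    kerI_eq_map B B' A hsurj
  set ι := iotaMap B B' A m with hιdef
  have hι_tmul : ∀ (a : A) (b : ↥(kerJ B B' ^ m)),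
      ι (a ⊗ₜ b) = a * algebraMap B A (b : B) := iotaMap_tmul B B' A m
  have hι_inj : Function.Injective ι := by
    have h1 : Function.Injective
        (LinearMap.baseChange A (Submodule.subtype (kerJ B B' ^ m : Ideal B))) := by
      have h2 := Module.Flat.lTensor_preserves_injective_linearMap
        (M := A) (Submodule.subtype (kerJ B B' ^ m : Ideal B))
        (Submodule.injective_subtype _)
      rw [← LinearMap.baseChange_eq_ltensor] at h2
      exact h2
    rw [hιdef]
    exact (Algebra.TensorProduct.rid B A A).injective.comp h1
  have hι_range : LinearMap.range ι = (kerI B B' A ^ m : Ideal A) := by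
    apply le_antisymm
    · rintro x ⟨t, rfl⟩
      induction t using TensorProduct.induction_on with
      | zero => rw [map_zero]; exact zero_mem _
      | tmul a b =>
        rw [hι_tmul]
        exact Ideal.mul_mem_left _ a (algebraMap_mem_pow_kerI B B' A m b.2)
      | add t₁ t₂ h₁ h₂ => rw [map_add]; exact add_mem h₁ h₂
    · have h2 : kerI B B' A ^ m = Ideal.map (algebraMap B A) (kerJ B B' ^ m) := by
        rw [hIJ, Ideal.map_pow]
      rw [h2]
      have h3 : Ideal.map (algebraMap B A) (kerJ B B' ^ m) ≤ LinearMap.range ι := by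
        rw [Ideal.map_le_iff_le_comap]
        intro j hj
        exact ⟨(1 : A) ⊗ₜ ⟨j, hj⟩, by rw [hι_tmul, one_mul]⟩
      exact h3
  set μ := muMap B B' A m with hμdef
  have hμ_tmul : ∀ (a : A) (b : ↥(kerJ B B' ^ m)),
      μ (a ⊗ₜ b) = Ideal.Quotient.mk (kerI B B' A) a ⊗ₜ[B ⧸ kerJ B B']
        (Submodule.Quotient.mk b : grJ B B' m) := muMap_tmul B B' A m
  have hμ_surj : Function.Surjective μ := by
    intro z
    induction z using TensorProduct.induction_on with
    | zero => exact ⟨0, map_zero μ⟩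
    | tmul x y =>
      obtain ⟨a, rfl⟩ := Ideal.Quotient.mk_surjective x
      obtain ⟨b, rfl⟩ := Submodule.Quotient.mk_surjective _ y
      exact ⟨a ⊗ₜ b, hμ_tmul a b⟩
    | add x y hx hy =>
      obtain ⟨t, rfl⟩ := hx
      obtain ⟨s, rfl⟩ := hy
      exact ⟨t + s, map_add μ t s⟩
  have hμ_J : ∀ j ∈ kerJ B B', ∀ t : A ⊗[B] ↥(kerJ B B' ^ m), μ (j • t) = 0 := by
    intro j hj t
    induction t using TensorProduct.induction_on with
    | zero => rw [smul_zero, map_zero]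
    | tmul a b =>
      rw [TensorProduct.smul_tmul', TensorProduct.smul_tmul, hμ_tmul]
      have hb : (Submodule.Quotient.mk (j • b) : grJ B B' m) = 0 :=
        (Submodule.Quotient.mk_eq_zero _).mpr (Submodule.smul_mem_smul hj trivial)
      rw [hb, TensorProduct.tmul_zero]
    | add t₁ t₂ h₁ h₂ => rw [smul_add, map_add, h₁, h₂, add_zero]
  have hμ_smulI : ∀ r ∈ kerI B B' A, ∀ t : A ⊗[B] ↥(kerJ B B' ^ m), μ (r • t) = 0 := by
    intro r hr
    rw [hIJ] at hr
    have hr' : r ∈ Ideal.span ((algebraMap B A) '' (kerJ B B' : Set B)) := hr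
    refine Submodule.span_induction (p := fun r _ => ∀ t, μ (r • t) = 0) ?_ ?_ ?_ ?_ hr'
    · rintro x ⟨j, hj, rfl⟩ t
      rw [algebraMap_smul]
      exact hμ_J j hj t
    · intro t; rw [zero_smul, map_zero]
    · intro x y hx hy ihx ihy t
      rw [add_smul, map_add, ihx, ihy, add_zero]
    · intro a x hx ih t
      rw [smul_eq_mul, mul_comm, mul_smul]
      exact ih (a • t)
  have hμ_I : ∀ t ∈ (kerI B B' A • ⊤ :
      Submodule A (A ⊗[B] ↥(kerJ B B' ^ m))), μ t = 0 := by
    intro t ht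
    refine Submodule.smul_induction_on ht (fun r hr n _ => hμ_smulI r hr n) ?_
    intro x y hx hy
    rw [map_add, hx, hy, add_zero]
  have hmem : ∀ t, ι t ∈ (kerI B B' A ^ m : Ideal A) := fun t =>
    hι_range ▸ LinearMap.mem_range_self ι t
  have hcomp : ∀ t, Ψ (μ t) =
      (Submodule.Quotient.mk ⟨ι t, hmem t⟩ : grI B B' A m) := by
    intro t
    induction t using TensorProduct.induction_on with
    | zero =>
      rw [map_zero, map_zero]
      have h0 : (⟨ι 0, hmem 0⟩ : ↥(kerI B B' A ^ m)) = 0 := Subtype.ext (map_zero ι)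
      rw [h0, Submodule.Quotient.mk_zero]
    | tmul a b =>
      rw [hμ_tmul, hΨ]
      exact congrArg _ (Subtype.ext (hι_tmul a b).symm)
    | add t₁ t₂ h₁ h₂ =>
      rw [map_add, map_add, h₁, h₂, ← Submodule.Quotient.mk_add]
      exact congrArg _ (Subtype.ext (map_add ι t₁ t₂).symm)
  constructor
  · -- injectivity
    rw [injective_iff_map_eq_zero]
    intro z hz
    obtain ⟨t, rfl⟩ := hμ_surj z
    rw [hcomp] at hz
    have h1 : (⟨ι t, hmem t⟩ : ↥(kerI B B' A ^ m)) ∈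
        (kerI B B' A • ⊤ : Submodule A ↥(kerI B B' A ^ m)) :=
      (Submodule.Quotient.mk_eq_zero _).mp hz
    have h2 : ι t ∈ (kerI B B' A • (kerI B B' A ^ m : Ideal A) : Submodule A A) := by
      have h := Submodule.mem_map_of_mem (f := Submodule.subtype (kerI B B' A ^ m)) h1
      rwa [Submodule.map_smul'', Submodule.map_top, Submodule.range_subtype] at h
    have h3 : ι t ∈ Submodule.map ι (kerI B B' A • ⊤ :
        Submodule A (A ⊗[B] ↥(kerJ B B' ^ m))) := by
      rw [Submodule.map_smul'', Submodule.map_top, hι_range]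
      exact h2
    obtain ⟨s, hs, hst⟩ := h3
    rw [← hι_inj hst]
    exact hμ_I s hs
  · -- surjectivity
    intro y
    obtain ⟨x, rfl⟩ := Submodule.Quotient.mk_surjective _ y
    obtain ⟨t, ht⟩ : (x : A) ∈ LinearMap.range ι := by rw [hι_range]; exact x.2
    exact ⟨μ t, by rw [hcomp]; exact congrArg _ (Subtype.ext ht)⟩


end
end

section
/- Let K be a field of characteristic zero, V a finite-dimensional K-vector space, q a quadratic form on V with polar bilinear form b (so q(u+v) = q(u) + q(v) + b(u,v)), and x ∈ V with q(x) ≠ 0. Define the quadratic form q' on V by q'(y) := b(x,y)² − 4·q(x)·q(y). Then the rank of q' equals rank(q) − 1, and x lies in the radical of q'. -/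
/-- Let `K` be a field of characteristic zero, `V` a finite-dimensional
`K`-vector space, `q` a quadratic form on `V` with polar bilinear form `b`
(so `q(u+v) = q(u) + q(v) + b(u,v)`), and `x ∈ V` with `q(x) ≠ 0`.  Let `q'` be the
quadratic form on `V` given by `q'(y) = b(x,y)² − 4·q(x)·q(y)`.  Then the rank of `q'`
equals `rank(q) − 1` (stated as `rank q' + 1 = rank q`), and `x` lies in the radical of
`q'`, i.e. `q'(x) = 0` and the polar form of `q'` pairs `x` trivially with every vector. -/
theorem rank_discriminant_form {K : Type*} [Field K] [CharZero K]
    (V : Type*) [AddCommGroup V] [Module K V] [FiniteDimensional K V]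
    (q : QuadraticForm K V) (x : V) (hx : q x ≠ 0)
    (q' : QuadraticForm K V)
    (hq' : ∀ y : V, q' y = QuadraticMap.polar q x y ^ 2 - 4 * q x * q y) :
    LinearMap.rank (QuadraticMap.polarBilin q') + 1 =
        LinearMap.rank (QuadraticMap.polarBilin q) ∧
      q' x = 0 ∧ ∀ w : V, QuadraticMap.polar q' x w = 0 := by
  have hxx : QuadraticMap.polar q x x = 2 * q x := by
    rw [QuadraticMap.polar_self, two_smul]; ring
  have hB' : ∀ u v, QuadraticMap.polar q' u v =
      2 * QuadraticMap.polar q x u * QuadraticMap.polar q x v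
        - 4 * q x * QuadraticMap.polar q u v := by
    intro u v
    have h1 : QuadraticMap.polar q' u v = q' (u + v) - q' u - q' v := rfl
    have h2 : q (u + v) = QuadraticMap.polar q u v + q u + q v := by
      simp only [QuadraticMap.polar]; ring
    rw [h1, hq', hq', hq', QuadraticMap.polar_add_right, h2]
    ring
  have hq'x : q' x = 0 := by rw [hq', hxx]; ring
  have hpol : ∀ w : V, QuadraticMap.polar q' x w = 0 := by
    intro w; rw [hB', hxx]; ring
  refine ⟨?_, hq'x, hpol⟩
  set B := QuadraticMap.polarBilin q with hBdef
  set B' := QuadraticMap.polarBilin q' with hB'def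
  have h2qx : (2 : K) * q x ≠ 0 := mul_ne_zero two_ne_zero hx
  have h4qx : -(4 * q x) ≠ 0 := neg_ne_zero.mpr (mul_ne_zero (by norm_num) hx)
  -- projection onto ker (B x) along x
  set P : V →ₗ[K] V := LinearMap.id - (((2 * q x)⁻¹ • (B x)).smulRight x) with hPdef
  have hPapply : ∀ u, P u = u - ((2 * q x)⁻¹ * B x u) • x := by
    intro u
    simp [hPdef, LinearMap.sub_apply, LinearMap.smulRight_apply, smul_smul]
  have hcomp : B' = (-(4 * q x)) • (B ∘ₗ P) := by
    ext u v
    have hBa : ∀ a b : V, B a b = QuadraticMap.polar q a b := fun a b => rfl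
    have hB'a : ∀ a b : V, B' a b = QuadraticMap.polar q' a b := fun a b => rfl
    simp only [LinearMap.smul_apply, LinearMap.comp_apply, hPapply, map_sub,
      map_smul, LinearMap.sub_apply, smul_eq_mul]
    rw [hB'a, hB', hBa, hBa, hBa]
    field_simp
    ring
  have hrangeB' : LinearMap.range B' = LinearMap.range (B ∘ₗ P) := by
    rw [hcomp]; exact LinearMap.range_smul _ _ h4qx
  -- range P = ker (B x)
  have hBxx : B x x = 2 * q x := hxx
  have hrangeP : LinearMap.range P = LinearMap.ker (B x) := by
    apply le_antisymm
    · rintro _ ⟨u, rfl⟩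
      simp only [LinearMap.mem_ker, hPapply, map_sub, map_smul, smul_eq_mul, hBxx]
      field_simp
      ring
    · intro u hu
      rw [LinearMap.mem_ker] at hu
      exact ⟨u, by rw [hPapply, hu, mul_zero, zero_smul, sub_zero]⟩
  have hkerle : LinearMap.ker B ≤ LinearMap.ker (B x) := by
    intro z hz
    rw [LinearMap.mem_ker] at hz ⊢
    have : B x z = B z x := QuadraticMap.polar_comm _ x z
    rw [this, hz]; rfl
  -- finrank computations
  have hBxne : B x ≠ 0 := fun h => by rw [h] at hBxx; exact h2qx (by simpa using hBxx.symm)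
  have hrangeBx : LinearMap.range (B x) = ⊤ := by
    rcases eq_bot_or_eq_top (LinearMap.range (B x)) with h | h
    · exact absurd (LinearMap.range_eq_bot.mp h) hBxne
    · exact h
  have hH : Module.finrank K (LinearMap.ker (B x)) + 1 = Module.finrank K V := by
    have := LinearMap.finrank_range_add_finrank_ker (B x)
    rw [hrangeBx, finrank_top, Module.finrank_self] at this
    omega
  -- rank-nullity for B restricted to H
  set H := LinearMap.ker (B x) with hHdef
  have hres := LinearMap.finrank_range_add_finrank_ker (B.domRestrict H)
  rw [LinearMap.range_domRestrict, LinearMap.ker_domRestrict] at hres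
  have hkereq : Module.finrank K (LinearMap.ker (B.domRestrict H)) =
      Module.finrank K (LinearMap.ker B) := by
    rw [LinearMap.ker_domRestrict]
    exact (Submodule.comapSubtypeEquivOfLe hkerle).finrank_eq
  rw [LinearMap.ker_domRestrict] at hkereq
  rw [hkereq] at hres
  have hrB := LinearMap.finrank_range_add_finrank_ker B
  have hrange_eq : LinearMap.range B' = Submodule.map B H := by
    rw [hrangeB', LinearMap.range_comp, hrangeP]
  have hnat : Module.finrank K (LinearMap.range B') + 1 =
      Module.finrank K (LinearMap.range B) := by
    rw [hrange_eq]
    omega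
  rw [LinearMap.rank, LinearMap.rank, ← Module.finrank_eq_rank K ↥(LinearMap.range B'),
    ← Module.finrank_eq_rank K ↥(LinearMap.range B)]
  exact_mod_cast hnat
end

section
/- Let A be a commutative ℂ-algebra, V a finite-dimensional ℂ-vector subspace of A, r ≥ 1 a natural number, and q a complex quadratic form on V of rank at least 2. Assume there exists c ∈ V with c^{2r} ≠ 0 in A, and assume that for every x ∈ V with q(x) = 0 one has x^{r+1} = 0 in A. Then for every x ∈ V: q(x) = 0 if and only if x^{r+1} = 0 if and only if x^{2r} = 0. In particular the three subsets Q = {[x] ∈ ℙ(V) : q(x) = 0}, R = {[x] : x^{r+1} = 0}, and S = {[x] : x^{2r} = 0} coincide. -/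
private lemma pow_zero_of_le {A : Type*} [CommRing A] {u : A} {m n : ℕ} (h : m ≤ n)
    (hu : u ^ m = 0) : u ^ n = 0 := by
  rw [← Nat.add_sub_cancel' h, pow_add, hu, zero_mul]

private lemma smul_eq_zero_iff' {A : Type*} [AddCommGroup A] [Module ℂ A] {μ : ℂ} (hμ : μ ≠ 0)
    {w : A} : μ • w = 0 ↔ w = 0 := by
  constructor
  · intro h
    have := congrArg (fun z => μ⁻¹ • z) h
    simpa [smul_smul, inv_mul_cancel₀ hμ] using this
  · intro h; simp [h]

/-- Simultaneous non-vanishing point for three quadratics in one complex variable. -/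
private lemma exists_t3 (α₁ β₁ γ₁ α₂ β₂ γ₂ α₃ β₃ γ₃ : ℂ)
    (h1 : α₁ ≠ 0 ∨ γ₁ ≠ 0) (h2 : α₂ ≠ 0 ∨ γ₂ ≠ 0) (h3 : α₃ ≠ 0 ∨ γ₃ ≠ 0) :
    ∃ t : ℂ, (α₁ + β₁ * t + γ₁ * t ^ 2 ≠ 0) ∧ (α₂ + β₂ * t + γ₂ * t ^ 2 ≠ 0) ∧
      (α₃ + β₃ * t + γ₃ * t ^ 2 ≠ 0) := by
  have key : ∀ α β γ : ℂ, α ≠ 0 ∨ γ ≠ 0 →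
      (Polynomial.C α + Polynomial.C β * Polynomial.X +
        Polynomial.C γ * Polynomial.X ^ 2 : Polynomial ℂ) ≠ 0 := by
    intro α β γ h hP
    rcases h with h | h
    · have := congrArg (fun P => Polynomial.coeff P 0) hP
      exact h (by simpa using this)
    · have := congrArg (fun P => Polynomial.coeff P 2) hP
      exact h (by simpa using this)
  set P₁ : Polynomial ℂ := Polynomial.C α₁ + Polynomial.C β₁ * Polynomial.X +
      Polynomial.C γ₁ * Polynomial.X ^ 2 with hP₁
  set P₂ : Polynomial ℂ := Polynomial.C α₂ + Polynomial.C β₂ * Polynomial.X +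
      Polynomial.C γ₂ * Polynomial.X ^ 2 with hP₂
  set P₃ : Polynomial ℂ := Polynomial.C α₃ + Polynomial.C β₃ * Polynomial.X +
      Polynomial.C γ₃ * Polynomial.X ^ 2 with hP₃
  have hprod : P₁ * P₂ * P₃ ≠ 0 :=
    mul_ne_zero (mul_ne_zero (key _ _ _ h1) (key _ _ _ h2)) (key _ _ _ h3)
  have : ∃ t, (P₁ * P₂ * P₃).eval t ≠ 0 := by
    by_contra h
    push_neg at h
    exact hprod (Polynomial.zero_of_eval_zero _ h)
  obtain ⟨t, ht⟩ := this
  simp only [Polynomial.eval_mul] at ht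
  refine ⟨t, ?_, ?_, ?_⟩ <;>
    [ (have := left_ne_zero_of_mul (left_ne_zero_of_mul ht));
      (have := right_ne_zero_of_mul (left_ne_zero_of_mul ht));
      (have := right_ne_zero_of_mul ht)] <;>
    simpa [hP₁, hP₂, hP₃] using this

private lemma lemM {A : Type*} [CommRing A] [Algebra ℂ A] {r : ℕ} (hr : 1 ≤ r) {u v : A}
    (hu : u ^ (r + 1) = 0) (hv : v ^ (r + 1) = 0) {a b : ℂ} (ha : a ≠ 0) (hb : b ≠ 0) :
    ((a • u + b • v) ^ (2 * r) = 0 ↔ u ^ r * v ^ r = 0) := by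
  have hexp : (a • u + b • v) ^ (2 * r) =
      (a ^ r * b ^ r * ((2 * r).choose r : ℂ)) • (u ^ r * v ^ r) := by
    rw [add_pow]
    rw [Finset.sum_eq_single r]
    · have h2r : 2 * r - r = r := by omega
      rw [h2r, smul_pow, smul_pow]
      rw [show (((2 * r).choose r : A)) = algebraMap ℂ A (((2 * r).choose r : ℂ)) by
        simp]
      rw [Algebra.smul_def, Algebra.smul_def, Algebra.smul_def]
      push_cast
      ring
    · intro k hk hkr
      rcases lt_or_gt_of_ne hkr with h | h
      · have : v ^ (2 * r - k) = 0 := pow_zero_of_le (by omega) hv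
        rw [smul_pow b, this, smul_zero, mul_zero, zero_mul]
      · have : u ^ k = 0 := pow_zero_of_le (by omega) hu
        rw [smul_pow a, this, smul_zero, zero_mul, zero_mul]
    · intro h
      exact absurd (Finset.mem_range.2 (by omega)) h
  rw [hexp, smul_eq_zero_iff']
  have : (2 * r).choose r ≠ 0 := (Nat.choose_pos (by omega)).ne'
  exact mul_ne_zero (mul_ne_zero (pow_ne_zero _ ha) (pow_ne_zero _ hb))
    (Nat.cast_ne_zero.2 this)

private lemma qeval {A : Type*} [CommRing A] [Algebra ℂ A] {V : Submodule ℂ A}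
    (q : QuadraticForm ℂ V) (a b : V) (t : ℂ) :
    q (a + t • b) = q a + QuadraticMap.polar q a b * t + q b * t ^ 2 := by
  have h1 : q (a + t • b) = q a + q (t • b) + QuadraticMap.polar q a (t • b) := by
    rw [QuadraticMap.polar]; ring
  rw [h1, QuadraticMap.polar_smul_right, QuadraticMap.map_smul]
  simp only [smul_eq_mul]
  ring

private lemma key {A : Type*} [CommRing A] [Algebra ℂ A] {V : Submodule ℂ A}
    {r : ℕ} (hr : 1 ≤ r) (q : QuadraticForm ℂ V)
    (hQR : ∀ x : V, q x = 0 → (x : A) ^ (r + 1) = 0)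
    (x y : V) (hx : q x ≠ 0) (hy : q y ≠ 0)
    (hd : QuadraticMap.polar q x y ^ 2 - 4 * q x * q y ≠ 0) :
    ((x : A) ^ (2 * r) = 0 ↔ (y : A) ^ (2 * r) = 0) := by
  set b := QuadraticMap.polar q x y with hb
  obtain ⟨s, hs⟩ := IsAlgClosed.exists_pow_nat_eq (k := ℂ) (b ^ 2 - 4 * q x * q y)
    (n := 2) (by norm_num)
  have hs0 : s ≠ 0 := by
    intro h; apply hd; rw [← hs, h]; ring
  set t₁ : ℂ := (-b + s) / (2 * q y) with ht₁def
  set t₂ : ℂ := (-b - s) / (2 * q y) with ht₂def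
  set u : V := x + t₁ • y with hudef
  set v : V := x + t₂ • y with hvdef
  have hqu : q u = 0 := by
    rw [hudef, qeval, ← hb, ht₁def]
    field_simp
    linear_combination hs
  have hqv : q v = 0 := by
    rw [hvdef, qeval, ← hb, ht₂def]
    field_simp
    linear_combination hs
  have hru : (u : A) ^ (r + 1) = 0 := hQR u hqu
  have hrv : (v : A) ^ (r + 1) = 0 := hQR v hqv
  have ht₁ : t₁ ≠ 0 := by
    intro h
    apply hx
    have := hqu
    rw [hudef, h, zero_smul, add_zero] at this
    exact this
  have ht₂ : t₂ ≠ 0 := by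
    intro h
    apply hx
    have := hqv
    rw [hvdef, h, zero_smul, add_zero] at this
    exact this
  have hτ : t₂ - t₁ ≠ 0 := by
    have hτval : t₂ - t₁ = -s / q y := by
      rw [ht₁def, ht₂def]
      field_simp
      ring
    rw [hτval]
    exact div_ne_zero (neg_ne_zero.2 hs0) hy
  have hucoe : (u : A) = (x : A) + t₁ • (y : A) := by
    rw [hudef]; push_cast; ring
  have hvcoe : (v : A) = (x : A) + t₂ • (y : A) := by
    rw [hvdef]; push_cast; ring
  have hxcomb : (x : A) = ((t₂ - t₁)⁻¹ * t₂) • (u : A) + (-((t₂ - t₁)⁻¹ * t₁)) • (v : A) := by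
    rw [hucoe, hvcoe]
    match_scalars <;> field_simp <;> ring
  have hycomb : (y : A) = (-(t₂ - t₁)⁻¹) • (u : A) + (t₂ - t₁)⁻¹ • (v : A) := by
    rw [hucoe, hvcoe]
    match_scalars <;> field_simp <;> ring
  have hIx : (x : A) ^ (2 * r) = 0 ↔ (u : A) ^ r * (v : A) ^ r = 0 := by
    rw [hxcomb]
    exact lemM hr hru hrv (mul_ne_zero (inv_ne_zero hτ) ht₂)
      (neg_ne_zero.2 (mul_ne_zero (inv_ne_zero hτ) ht₁))
  have hIy : (y : A) ^ (2 * r) = 0 ↔ (u : A) ^ r * (v : A) ^ r = 0 := by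
    rw [hycomb]
    exact lemM hr hru hrv (neg_ne_zero.2 (inv_ne_zero hτ)) (inv_ne_zero hτ)
  rw [hIx, hIy]

private lemma notall {V : Type*} [AddCommGroup V] [Module ℂ V] (q : QuadraticForm ℂ V)
    (hrank : (2 : Cardinal) ≤ LinearMap.rank (QuadraticMap.polarBilin q))
    (x : V) (hx : q x ≠ 0) :
    ∃ w : V, QuadraticMap.polar q x w ^ 2 - 4 * q x * q w ≠ 0 := by
  by_contra h
  push_neg at h
  have h' : ∀ w : V, QuadraticMap.polar q x w ^ 2 = 4 * q x * q w :=
    fun w => sub_eq_zero.1 (h w)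
  have hB : ∀ z w : V, QuadraticMap.polar q z w =
      QuadraticMap.polar q x z * QuadraticMap.polar q x w / (2 * q x) := by
    intro z w
    have h1 := h' z
    have h2 := h' w
    have h3 := h' (z + w)
    rw [QuadraticMap.polar_add_right] at h3
    have hq : q (z + w) = q z + q w + QuadraticMap.polar q z w := by
      rw [QuadraticMap.polar]; ring
    rw [hq] at h3
    field_simp
    linear_combination (-1/2 : ℂ) * (h3 - h1 - h2)
  have hle : LinearMap.range (QuadraticMap.polarBilin q) ≤
      ℂ ∙ (QuadraticMap.polarBilin q x) := by
    rintro _ ⟨z, rfl⟩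
    refine Submodule.mem_span_singleton.2
      ⟨QuadraticMap.polar q x z / (2 * q x), ?_⟩
    ext w
    simp only [LinearMap.smul_apply, QuadraticMap.polarBilin_apply_apply, smul_eq_mul]
    rw [hB z w]
    ring
  have hr1 : LinearMap.rank (QuadraticMap.polarBilin q) ≤ 1 := by
    calc LinearMap.rank (QuadraticMap.polarBilin q)
        = Module.rank ℂ (LinearMap.range (QuadraticMap.polarBilin q)) := rfl
      _ ≤ Module.rank ℂ (ℂ ∙ (QuadraticMap.polarBilin q x)) := Submodule.rank_mono hle
      _ ≤ Cardinal.mk ({QuadraticMap.polarBilin q x} : Set (V →ₗ[ℂ] ℂ)) :=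
          rank_span_le _
      _ = 1 := Cardinal.mk_singleton _
  have h2 := hrank.trans hr1
  norm_num at h2

private lemma Deval {A : Type*} [CommRing A] [Algebra ℂ A] {V : Submodule ℂ A}
    (q : QuadraticForm ℂ V) (x a c : V) (t : ℂ) :
    QuadraticMap.polar q x (a + t • c) ^ 2 - 4 * q x * q (a + t • c) =
      (QuadraticMap.polar q x a ^ 2 - 4 * q x * q a) +
      (2 * QuadraticMap.polar q x a * QuadraticMap.polar q x c
        - 4 * q x * QuadraticMap.polar q a c) * t +
      (QuadraticMap.polar q x c ^ 2 - 4 * q x * q c) * t ^ 2 := by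
  have hq : q (a + t • c) = q a + QuadraticMap.polar q a c * t + q c * t ^ 2 := by
    have h1 : q (a + t • c) = q a + q (t • c) + QuadraticMap.polar q a (t • c) := by
      rw [QuadraticMap.polar]; ring
    rw [h1, QuadraticMap.polar_smul_right, QuadraticMap.map_smul]
    simp only [smul_eq_mul]; ring
  rw [hq, QuadraticMap.polar_add_right, QuadraticMap.polar_smul_right]
  simp only [smul_eq_mul]
  ring

/-- Let `A` be a commutative `ℂ`-algebra, `V` a finite-dimensional
`ℂ`-vector subspace of `A`, `r ≥ 1` a natural number, and `q` a complex quadratic form on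
`V` of rank at least `2`.  Assume there exists `c ∈ V` with `c^(2r) ≠ 0` in `A`, and that
every `x ∈ V` with `q(x) = 0` satisfies `x^(r+1) = 0` in `A`.  Then for every `x ∈ V`:
`q(x) = 0` iff `x^(r+1) = 0` iff `x^(2r) = 0`; in particular the corresponding quadric,
the locus `{x^(r+1) = 0}`, and the locus `{x^(2r) = 0}` coincide in `ℙ(V)`. -/
theorem quadric_eq_power_vanishing_locus {A : Type*} [CommRing A] [Algebra ℂ A]
    (V : Submodule ℂ A) [FiniteDimensional ℂ V] (r : ℕ) (hr : 1 ≤ r)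
    (q : QuadraticForm ℂ V)
    (hrank : (2 : Cardinal) ≤ LinearMap.rank (QuadraticMap.polarBilin q))
    (hc : ∃ c : V, (c : A) ^ (2 * r) ≠ 0)
    (hQR : ∀ x : V, q x = 0 → (x : A) ^ (r + 1) = 0) :
    ∀ x : V, (q x = 0 ↔ (x : A) ^ (r + 1) = 0) ∧ (q x = 0 ↔ (x : A) ^ (2 * r) = 0) := by
  obtain ⟨c, hc2r⟩ := hc
  have pow2r : ∀ z : V, (z : A) ^ (r + 1) = 0 → (z : A) ^ (2 * r) = 0 := fun z h =>
    pow_zero_of_le (by omega) h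
  have hqc : q c ≠ 0 := fun h => hc2r (pow2r c (hQR c h))
  have main : ∀ x : V, q x ≠ 0 → (x : A) ^ (2 * r) ≠ 0 := by
    intro x hqx
    obtain ⟨w₁, hw₁⟩ := notall q hrank x hqx
    obtain ⟨w₂, hw₂⟩ := notall q hrank c hqc
    obtain ⟨t, htq, htD, -⟩ := exists_t3
      (q x) (QuadraticMap.polar q x w₁) (q w₁)
      (QuadraticMap.polar q x x ^ 2 - 4 * q x * q x)
      (2 * QuadraticMap.polar q x x * QuadraticMap.polar q x w₁
        - 4 * q x * QuadraticMap.polar q x w₁)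
      (QuadraticMap.polar q x w₁ ^ 2 - 4 * q x * q w₁)
      1 0 0
      (Or.inl hqx) (Or.inr hw₁) (Or.inl one_ne_zero)
    have hqz₁ : q (x + t • w₁) ≠ 0 := by rw [qeval]; exact htq
    have hDxz₁ : QuadraticMap.polar q x (x + t • w₁) ^ 2
        - 4 * q x * q (x + t • w₁) ≠ 0 := by rw [Deval]; exact htD
    obtain ⟨t', htq', htD', htD''⟩ := exists_t3
      (q (x + t • w₁)) (QuadraticMap.polar q (x + t • w₁) w₂) (q w₂)
      (QuadraticMap.polar q x (x + t • w₁) ^ 2 - 4 * q x * q (x + t • w₁))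
      (2 * QuadraticMap.polar q x (x + t • w₁) * QuadraticMap.polar q x w₂
        - 4 * q x * QuadraticMap.polar q (x + t • w₁) w₂)
      (QuadraticMap.polar q x w₂ ^ 2 - 4 * q x * q w₂)
      (QuadraticMap.polar q c (x + t • w₁) ^ 2 - 4 * q c * q (x + t • w₁))
      (2 * QuadraticMap.polar q c (x + t • w₁) * QuadraticMap.polar q c w₂
        - 4 * q c * QuadraticMap.polar q (x + t • w₁) w₂)
      (QuadraticMap.polar q c w₂ ^ 2 - 4 * q c * q w₂)
      (Or.inl hqz₁) (Or.inl hDxz₁) (Or.inr hw₂)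
    set z : V := (x + t • w₁) + t' • w₂ with hzdef
    have hqz : q z ≠ 0 := by rw [hzdef, qeval]; exact htq'
    have hDxz : QuadraticMap.polar q x z ^ 2 - 4 * q x * q z ≠ 0 := by
      rw [hzdef, Deval]; exact htD'
    have hDcz : QuadraticMap.polar q c z ^ 2 - 4 * q c * q z ≠ 0 := by
      rw [hzdef, Deval]; exact htD''
    have h1 := key hr q hQR x z hqx hqz hDxz
    have h2 := key hr q hQR c z hqc hqz hDcz
    intro h0
    exact hc2r (h2.mpr (h1.mp h0))
  intro x
  refine ⟨⟨hQR x, ?_⟩, ⟨fun h => pow2r x (hQR x h), ?_⟩⟩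
  · intro h
    by_contra hq
    exact main x hq (pow2r x h)
  · intro h
    by_contra hq
    exact main x hq h
end

section
/- Let A be a commutative ring, r ≥ 1 a natural number, and w, v, b, λ, λ' ∈ A satisfying w^{r+1} = 0, v^{r+1} = 0, b·v^r = 0, b³·v^{r−1} = 0, and w^r·b = 0. Set a := λw + b + λ'v. Then 2·a^{r+1}·v^{r−1} = (r+1)·λ^{r−1}·( r·w^{r−1}·v^{r−1}·b² + 2·λλ'·w^r·v^r ) in A. -/
/-- Let `A` be a commutative ring, `r ≥ 1`, and `w, v, b, λ, λ' ∈ A`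
satisfying `w^(r+1) = 0`, `v^(r+1) = 0`, `b·v^r = 0`, `b³·v^(r−1) = 0`, and `w^r·b = 0`.
Set `a := λw + b + λ'v`.  Then
`2·a^(r+1)·v^(r−1) = (r+1)·λ^(r−1)·( r·w^(r−1)·v^(r−1)·b² + 2·λλ'·w^r·v^r )`. -/
theorem fujiki_relation_identity {A : Type*} [CommRing A] (r : ℕ) (hr : 1 ≤ r)
    (w v b lam lam' : A) (hw : w ^ (r + 1) = 0) (hv : v ^ (r + 1) = 0)
    (hbv : b * v ^ r = 0) (hbbv : b ^ 3 * v ^ (r - 1) = 0) (hwb : w ^ r * b = 0) :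
    2 * ((lam * w + b + lam' * v) ^ (r + 1) * v ^ (r - 1)) =
      ((r : A) + 1) * lam ^ (r - 1) *
        ((r : A) * (w ^ (r - 1) * v ^ (r - 1) * b ^ 2) +
          2 * (lam * lam') * (w ^ r * v ^ r)) := by
  obtain ⟨m, rfl⟩ : ∃ m, r = m + 1 := ⟨r - 1, (Nat.succ_pred_eq_of_pos hr).symm⟩
  simp only [Nat.add_sub_cancel] at *
  have L1 : (lam * w + b) ^ (m + 1) * v ^ (m + 1)
      = lam ^ (m + 1) * (w ^ (m + 1) * v ^ (m + 1)) := by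
    rw [add_pow, Finset.sum_mul, Finset.sum_eq_single (m + 1)]
    · simp [mul_pow, Nat.choose_self]
      ring
    · intro k hk hne
      have e : m + 1 - k = (m - k) + 1 := by simp at hk; omega
      rw [e, pow_succ]
      linear_combination ((lam * w) ^ k * b ^ (m - k) * (((m + 1).choose k : ℕ) : A)) * hbv
    · intro h; exact absurd (Finset.self_mem_range_succ (m + 1)) h
  have hch : (m + 2).choose 2 * 2 = (m + 2) * (m + 1) := by
    rw [Nat.choose_two_right]
    have e : m + 2 - 1 = m + 1 := rfl
    rw [e]
    refine Nat.div_mul_cancel ?_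
    rcases Nat.even_mul_succ_self (m + 1) with ⟨c, hc⟩
    exact ⟨c, by have hc' : (m + 1) * (m + 2) = c + c := hc; rw [mul_comm]; omega⟩
  have L2 : 2 * ((lam * w + b) ^ (m + 2) * v ^ m)
      = ((m + 2 : ℕ) : A) * ((m + 1 : ℕ) : A) * lam ^ m * (w ^ m * b ^ 2 * v ^ m) := by
    rw [add_pow, Finset.sum_mul, Finset.sum_eq_single m]
    · have e : m + 2 - m = 2 := by omega
      rw [e]
      have hc : (m + 2).choose m = (m + 2).choose 2 := by
        have := Nat.choose_symm (n := m + 2) (k := 2) (by omega)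
        simpa using this
      have hcast : (((m + 2).choose m : ℕ) : A) * 2 = ((m + 2 : ℕ) : A) * ((m + 1 : ℕ) : A) := by
        have h2 := congrArg (fun n : ℕ => (n : A)) hch
        push_cast at h2
        rw [hc]; push_cast; linear_combination h2
      calc 2 * ((lam * w) ^ m * b ^ 2 * ((m + 2).choose m : A) * v ^ m)
          = (((m + 2).choose m : ℕ) : A) * 2 * ((lam * w) ^ m * b ^ 2 * v ^ m) := by ring
        _ = ((m + 2 : ℕ) : A) * ((m + 1 : ℕ) : A) * lam ^ m * (w ^ m * b ^ 2 * v ^ m) := by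
            rw [hcast, mul_pow]; ring
    · intro k hk hne
      have hk' : k < m + 3 := by simp at hk; omega
      rcases lt_or_gt_of_ne hne with hlt | hgt
      · have e : m + 2 - k = (m - 1 - k) + 3 := by omega
        rw [e, pow_add]
        linear_combination ((lam * w) ^ k * b ^ (m - 1 - k) * (((m + 2).choose k : ℕ) : A)) * hbbv
      · have : k = m + 1 ∨ k = m + 2 := by omega
        rcases this with rfl | rfl
        · have e : m + 2 - (m + 1) = 1 := by omega
          rw [e, pow_one, mul_pow]
          linear_combination (lam ^ (m + 1) * (((m + 2).choose (m + 1) : ℕ) : A) * v ^ m) * hwb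
        · have e : m + 2 - (m + 2) = 0 := by omega
          rw [e, pow_zero, mul_pow]
          linear_combination (lam ^ (m + 2) * (((m + 2).choose (m + 2) : ℕ) : A) * v ^ m) * hw
    · intro h; exact absurd (by simp : m ∈ Finset.range (m + 3)) h
  have key : (lam * w + b + lam' * v) ^ (m + 2) * v ^ m
      = (lam * w + b) ^ (m + 2) * v ^ m
        + ((m + 2 : ℕ) : A) * lam' * ((lam * w + b) ^ (m + 1) * v ^ (m + 1)) := by
    rw [add_pow, Finset.sum_mul, Finset.sum_range_succ, Finset.sum_range_succ]
    have h0 : ∀ k ∈ Finset.range (m + 1),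
        (lam * w + b) ^ k * (lam' * v) ^ (m + 2 - k) * ((m + 2).choose k : A) * v ^ m = 0 := by
      intro k hk
      have e : m + 2 - k = (m - k) + 2 := by simp [Nat.lt_succ_iff] at hk; omega
      rw [e]
      linear_combination
        ((lam * w + b) ^ k * lam' ^ (m - k + 2) * v ^ (m - k) * (((m + 2).choose k : ℕ) : A)) * hv
    rw [Finset.sum_eq_zero h0]
    have e1 : m + 2 - (m + 1) = 1 := by omega
    have e2 : m + 2 - (m + 2) = 0 := by omega
    rw [e1, e2, pow_one, pow_zero, Nat.choose_self, Nat.choose_succ_self_right]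
    push_cast; ring
  calc 2 * ((lam * w + b + lam' * v) ^ (m + 1 + 1) * v ^ m)
      = 2 * ((lam * w + b) ^ (m + 2) * v ^ m)
        + 2 * (((m + 2 : ℕ) : A) * lam' * ((lam * w + b) ^ (m + 1) * v ^ (m + 1))) := by
        rw [show m + 1 + 1 = m + 2 from rfl, key]; ring
    _ = _ := by rw [L1, L2]; push_cast; ring
end
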